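/- arXiv:1111.2440 — 11 statements merged into one kernel-verified Lean document; each statement's English description precedes it below -/
import Mathlib

section
/- Let F and G be Bessel mappings for H with respect to (Ω, μ) and suppose that F is norm bounded by some L > 0 or G is norm bounded by some L > 0. Let m : Ω → ℂ be measurable, essentially bounded, and vanishing at infinity in the sense that for every ε > 0 there exists a measurable K ⊆ Ω with μ(K) < ∞ such that |m(ω)| ≤ ε for μ-almost every ω ∈ Ω \ K. If M : H → H is a bounded operator satisfying ⟨M f, g⟩ = ∫_Ω m(ω)⟨f, F(ω)⟩⟨G(ω), g⟩ dμ(ω) for all f, g ∈ H, then M is a compact operator. -/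
open MeasureTheory

local notation "⟪" x ", " y "⟫" => @inner ℂ _ _ x y

lemma aux_rpow_half {A : ENNReal} : (A ^ 2) ^ (1/2 : ℝ) = A := by
  rw [← ENNReal.rpow_natCast A 2, ← ENNReal.rpow_mul]
  norm_num

lemma aux_pair {Ω : Type} [MeasurableSpace Ω] {ν : Measure Ω} {a b : Ω → ENNReal}
    (ha : AEMeasurable a ν) (hb : AEMeasurable b ν) {A B : ENNReal}
    (hA : ∫⁻ x, a x ^ 2 ∂ν ≤ A ^ 2) (hB : ∫⁻ x, b x ^ 2 ∂ν ≤ B ^ 2) :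
    ∫⁻ x, a x * b x ∂ν ≤ A * B := by
  have h2 : Real.HolderConjugate 2 2 := Real.HolderConjugate.two_two
  have := ENNReal.lintegral_mul_le_Lp_mul_Lq ν h2 ha hb
  simp only [Pi.mul_apply] at this
  have hr : ∀ c : ENNReal, c ^ (2:ℝ) = c ^ 2 := fun c => by
    rw [← ENNReal.rpow_natCast c 2]; norm_num
  simp only [hr] at this
  refine this.trans ?_
  calc (∫⁻ x, a x ^ 2 ∂ν) ^ (1/2:ℝ) * (∫⁻ x, b x ^ 2 ∂ν) ^ (1/2:ℝ)
      ≤ (A ^ 2) ^ (1/2:ℝ) * (B ^ 2) ^ (1/2:ℝ) := by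
        exact mul_le_mul' (ENNReal.rpow_le_rpow hA (by norm_num))
          (ENNReal.rpow_le_rpow hB (by norm_num))
    _ = A * B := by rw [aux_rpow_half, aux_rpow_half]

lemma aux_ofReal_sq {B r : ℝ} (hB : 0 ≤ B) (hr : 0 ≤ r) :
    ENNReal.ofReal (B * r ^ 2) = ENNReal.ofReal (Real.sqrt B * r) ^ 2 := by
  rw [← ENNReal.ofReal_pow (by positivity), mul_pow, Real.sq_sqrt hB]

lemma aux_inner_meas {Ω : Type} [MeasurableSpace Ω]
    {H : Type} [NormedAddCommGroup H] [InnerProductSpace ℂ H]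
    {G : Ω → H} (hG_meas : ∀ f : H, Measurable fun ω => ⟪G ω, f⟫) (y : H) :
    Measurable fun ω => ⟪y, G ω⟫ := by
  have : (fun ω => ⟪y, G ω⟫) = fun ω => (starRingEnd ℂ) ⟪G ω, y⟫ := by
    funext ω; rw [inner_conj_symm]
  rw [this]
  exact Complex.continuous_conj.measurable.comp (hG_meas y)

lemma aux_integrable {Ω : Type} [MeasurableSpace Ω] {μ : Measure Ω}
    {H : Type} [NormedAddCommGroup H] [InnerProductSpace ℂ H]
    {F G : Ω → H} {B_F B_G : ℝ} (hBF : 0 ≤ B_F) (hBG : 0 ≤ B_G)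
    (hF_meas : ∀ f : H, Measurable fun ω => ⟪F ω, f⟫)
    (hF_bessel : ∀ f : H,
      ∫⁻ ω, (‖⟪F ω, f⟫‖₊ : ENNReal) ^ 2 ∂μ ≤ ENNReal.ofReal (B_F * ‖f‖ ^ 2))
    (hG_meas : ∀ f : H, Measurable fun ω => ⟪G ω, f⟫)
    (hG_bessel : ∀ f : H,
      ∫⁻ ω, (‖⟪G ω, f⟫‖₊ : ENNReal) ^ 2 ∂μ ≤ ENNReal.ofReal (B_G * ‖f‖ ^ 2))
    {m : Ω → ℂ} (hm_meas : Measurable m) {C' : ℝ}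
    (hmC : ∀ᵐ ω ∂μ, ‖m ω‖ ≤ C') (x y : H) :
    Integrable (fun ω => m ω * ⟪F ω, x⟫ * ⟪y, G ω⟫) μ := by
  have hmeas : Measurable (fun ω => m ω * ⟪F ω, x⟫ * ⟪y, G ω⟫) :=
    (hm_meas.mul (hF_meas x)).mul (aux_inner_meas hG_meas y)
  refine ⟨hmeas.aestronglyMeasurable, ?_⟩
  rw [HasFiniteIntegral]
  have hpt : ∀ ω, (‖m ω * ⟪F ω, x⟫ * ⟪y, G ω⟫‖₊ : ENNReal)
      = (‖m ω‖₊ : ENNReal) * ((‖⟪F ω, x⟫‖₊ : ENNReal) * (‖⟪G ω, y⟫‖₊ : ENNReal)) := by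
    intro ω
    rw [nnnorm_mul, nnnorm_mul]
    have : ‖⟪y, G ω⟫‖₊ = ‖⟪G ω, y⟫‖₊ := Subtype.ext (norm_inner_symm y (G ω))
    rw [this]
    push_cast
    ring
  calc ∫⁻ ω, (‖m ω * ⟪F ω, x⟫ * ⟪y, G ω⟫‖₊ : ENNReal) ∂μ
      = ∫⁻ ω, (‖m ω‖₊ : ENNReal) * ((‖⟪F ω, x⟫‖₊ : ENNReal) * (‖⟪G ω, y⟫‖₊ : ENNReal)) ∂μ :=
        lintegral_congr hpt
    _ ≤ ∫⁻ ω, ENNReal.ofReal C' * ((‖⟪F ω, x⟫‖₊ : ENNReal) * (‖⟪G ω, y⟫‖₊ : ENNReal)) ∂μ := by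
        refine lintegral_mono_ae ?_
        filter_upwards [hmC] with ω h
        refine mul_le_mul_left ?_ _
        rw [← enorm_eq_nnnorm, ← ofReal_norm]
        exact ENNReal.ofReal_le_ofReal h
    _ = ENNReal.ofReal C' * ∫⁻ ω, (‖⟪F ω, x⟫‖₊ : ENNReal) * (‖⟪G ω, y⟫‖₊ : ENNReal) ∂μ :=
        lintegral_const_mul' _ _ ENNReal.ofReal_ne_top
    _ ≤ ENNReal.ofReal C' *
          (ENNReal.ofReal (Real.sqrt B_F * ‖x‖) * ENNReal.ofReal (Real.sqrt B_G * ‖y‖)) := by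
        refine mul_le_mul_right ?_ _
        refine aux_pair ((hF_meas x).nnnorm.coe_nnreal_ennreal.aemeasurable)
          ((hG_meas y).nnnorm.coe_nnreal_ennreal.aemeasurable) ?_ ?_
        · exact (hF_bessel x).trans_eq (aux_ofReal_sq hBF (norm_nonneg _))
        · exact (hG_bessel y).trans_eq (aux_ofReal_sq hBG (norm_nonneg _))
    _ < ⊤ := by
        refine ENNReal.mul_lt_top ENNReal.ofReal_lt_top ?_
        exact ENNReal.mul_lt_top ENNReal.ofReal_lt_top ENNReal.ofReal_lt_top

lemma aux_est {Ω : Type} [MeasurableSpace Ω] (μ : Measure Ω)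
    {H : Type} [NormedAddCommGroup H] [InnerProductSpace ℂ H]
    {F G : Ω → H} {B_F B_G : ℝ} (hBF : 0 ≤ B_F) (hBG : 0 ≤ B_G)
    (hF_meas : ∀ f : H, Measurable fun ω => ⟪F ω, f⟫)
    (hF_bessel : ∀ f : H,
      ∫⁻ ω, (‖⟪F ω, f⟫‖₊ : ENNReal) ^ 2 ∂μ ≤ ENNReal.ofReal (B_F * ‖f‖ ^ 2))
    (hG_meas : ∀ f : H, Measurable fun ω => ⟪G ω, f⟫)
    (hG_bessel : ∀ f : H,
      ∫⁻ ω, (‖⟪G ω, f⟫‖₊ : ENNReal) ^ 2 ∂μ ≤ ENNReal.ofReal (B_G * ‖f‖ ^ 2))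
    {m : Ω → ℂ} (hm_meas : Measurable m) {C' : ℝ} (hC'0 : 0 ≤ C')
    (hmC : ∀ᵐ ω ∂μ, ‖m ω‖ ≤ C')
    {ε : ℝ} (hε : 0 < ε) {K : Set Ω} (hKmeas : MeasurableSet K)
    (hKm : ∀ᵐ ω ∂μ, ω ∉ K → ‖m ω‖ ≤ ε)
    (f' g' : H) {A1 A2 : ℝ} (hA1 : 0 ≤ A1) (hA2 : 0 ≤ A2)
    (hK1 : ∫⁻ ω in K, (‖⟪F ω, f'⟫‖₊ : ENNReal) ^ 2 ∂μ ≤ ENNReal.ofReal A1 ^ 2)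
    (hK2 : ∫⁻ ω in K, (‖⟪G ω, g'⟫‖₊ : ENNReal) ^ 2 ∂μ ≤ ENNReal.ofReal A2 ^ 2) :
    ‖∫ ω, m ω * ⟪F ω, f'⟫ * ⟪g', G ω⟫ ∂μ‖
      ≤ ε * ((Real.sqrt B_F * ‖f'‖) * (Real.sqrt B_G * ‖g'‖)) + C' * (A1 * A2) := by
  set a : Ω → ENNReal := fun ω => (‖⟪F ω, f'⟫‖₊ : ENNReal) with ha_def
  set b : Ω → ENNReal := fun ω => (‖⟪G ω, g'⟫‖₊ : ENNReal) with hb_def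
  have ha : Measurable a := (hF_meas f').nnnorm.coe_nnreal_ennreal
  have hb : Measurable b := (hG_meas g').nnnorm.coe_nnreal_ennreal
  have hpt : ∀ ω, (‖m ω * ⟪F ω, f'⟫ * ⟪g', G ω⟫‖₊ : ENNReal)
      = (‖m ω‖₊ : ENNReal) * (a ω * b ω) := by
    intro ω
    rw [nnnorm_mul, nnnorm_mul]
    have : ‖⟪g', G ω⟫‖₊ = ‖⟪G ω, g'⟫‖₊ := Subtype.ext (norm_inner_symm g' (G ω))
    rw [this]
    push_cast
    ring
  have hKpart : ∫⁻ ω in K, (‖m ω * ⟪F ω, f'⟫ * ⟪g', G ω⟫‖₊ : ENNReal) ∂μ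
      ≤ ENNReal.ofReal C' * (ENNReal.ofReal A1 * ENNReal.ofReal A2) := by
    calc ∫⁻ ω in K, (‖m ω * ⟪F ω, f'⟫ * ⟪g', G ω⟫‖₊ : ENNReal) ∂μ
        = ∫⁻ ω in K, (‖m ω‖₊ : ENNReal) * (a ω * b ω) ∂μ := lintegral_congr hpt
      _ ≤ ∫⁻ ω in K, ENNReal.ofReal C' * (a ω * b ω) ∂μ := by
          refine lintegral_mono_ae ?_
          filter_upwards [ae_restrict_of_ae hmC] with ω h
          refine mul_le_mul_left ?_ _
          rw [← enorm_eq_nnnorm, ← ofReal_norm]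
          exact ENNReal.ofReal_le_ofReal h
      _ = ENNReal.ofReal C' * ∫⁻ ω in K, a ω * b ω ∂μ :=
          lintegral_const_mul' _ _ ENNReal.ofReal_ne_top
      _ ≤ ENNReal.ofReal C' * (ENNReal.ofReal A1 * ENNReal.ofReal A2) :=
          mul_le_mul_right (aux_pair ha.aemeasurable hb.aemeasurable hK1 hK2) _
  have hKcpart : ∫⁻ ω in Kᶜ, (‖m ω * ⟪F ω, f'⟫ * ⟪g', G ω⟫‖₊ : ENNReal) ∂μ
      ≤ ENNReal.ofReal ε *
        (ENNReal.ofReal (Real.sqrt B_F * ‖f'‖) * ENNReal.ofReal (Real.sqrt B_G * ‖g'‖)) := by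
    calc ∫⁻ ω in Kᶜ, (‖m ω * ⟪F ω, f'⟫ * ⟪g', G ω⟫‖₊ : ENNReal) ∂μ
        = ∫⁻ ω in Kᶜ, (‖m ω‖₊ : ENNReal) * (a ω * b ω) ∂μ := lintegral_congr hpt
      _ ≤ ∫⁻ ω in Kᶜ, ENNReal.ofReal ε * (a ω * b ω) ∂μ := by
          refine lintegral_mono_ae ?_
          filter_upwards [ae_restrict_of_ae hKm, ae_restrict_mem hKmeas.compl] with ω h hmem
          refine mul_le_mul_left ?_ _
          rw [← enorm_eq_nnnorm, ← ofReal_norm]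
          exact ENNReal.ofReal_le_ofReal (h hmem)
      _ = ENNReal.ofReal ε * ∫⁻ ω in Kᶜ, a ω * b ω ∂μ :=
          lintegral_const_mul' _ _ ENNReal.ofReal_ne_top
      _ ≤ ENNReal.ofReal ε *
          (ENNReal.ofReal (Real.sqrt B_F * ‖f'‖) * ENNReal.ofReal (Real.sqrt B_G * ‖g'‖)) := by
          refine mul_le_mul_right ?_ _
          refine aux_pair ha.aemeasurable hb.aemeasurable ?_ ?_
          · exact (setLIntegral_le_lintegral _ _).trans
              ((hF_bessel f').trans_eq (aux_ofReal_sq hBF (norm_nonneg _)))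
          · exact (setLIntegral_le_lintegral _ _).trans
              ((hG_bessel g').trans_eq (aux_ofReal_sq hBG (norm_nonneg _)))
  have hle : ∫⁻ ω, (‖m ω * ⟪F ω, f'⟫ * ⟪g', G ω⟫‖₊ : ENNReal) ∂μ
      ≤ ENNReal.ofReal
          (ε * ((Real.sqrt B_F * ‖f'‖) * (Real.sqrt B_G * ‖g'‖)) + C' * (A1 * A2)) := by
    rw [← lintegral_add_compl _ hKmeas (μ := μ)]
    refine le_trans (add_le_add hKpart hKcpart) (le_of_eq ?_)
    rw [ENNReal.ofReal_add (by positivity) (by positivity),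
      ENNReal.ofReal_mul hε.le, ENNReal.ofReal_mul hC'0,
      ENNReal.ofReal_mul (by positivity : (0:ℝ) ≤ Real.sqrt B_F * ‖f'‖),
      ENNReal.ofReal_mul hA1]
    ring
  calc ‖∫ ω, m ω * ⟪F ω, f'⟫ * ⟪g', G ω⟫ ∂μ‖
      ≤ (∫⁻ ω, (‖m ω * ⟪F ω, f'⟫ * ⟪g', G ω⟫‖₊ : ENNReal) ∂μ).toReal := by
        have h := norm_integral_le_lintegral_norm (μ := μ)
          (fun ω => m ω * ⟪F ω, f'⟫ * ⟪g', G ω⟫)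
        simp only [ofReal_norm, enorm_eq_nnnorm] at h
        exact h
    _ ≤ _ := ENNReal.toReal_le_of_le_ofReal (by positivity) hle
lemma aux_exists_proj {Ω : Type} [MeasurableSpace Ω] (μ : Measure Ω)
    {H : Type} [NormedAddCommGroup H] [InnerProductSpace ℂ H]
    (F : Ω → H) (hF_meas : ∀ f : H, Measurable fun ω => ⟪F ω, f⟫) (L : ℝ)
    (hFb : ∀ᵐ ω ∂μ, ‖F ω‖ ≤ L) (K : Set Ω) (hK : μ K ≠ ⊤)
    {δ : ENNReal} (hδ0 : δ ≠ 0) :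
    ∃ (n : ℕ) (v : Fin n → H), Orthonormal ℂ v ∧
      ∀ f : H, (∀ i, ⟪v i, f⟫ = 0) →
        ∫⁻ ω in K, (‖⟪F ω, f⟫‖₊ : ENNReal) ^ 2 ∂μ ≤ δ * (‖f‖₊ : ENNReal) ^ 2 := by
  classical
  set Q : H → ENNReal := fun f => ∫⁻ ω in K, (‖⟪F ω, f⟫‖₊ : ENNReal) ^ 2 ∂μ with hQ
  have key : ∀ (n : ℕ) (v : Fin n → H), Orthonormal ℂ v → (∀ i, δ < Q (v i)) →
      (n : ENNReal) * δ ≤ ENNReal.ofReal (L ^ 2) * μ K := by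
    intro n v hv hvQ
    have h1 : (n : ENNReal) * δ ≤ ∑ i : Fin n, Q (v i) := by
      calc (n : ENNReal) * δ = ∑ _i : Fin n, δ := by
            simp [Finset.sum_const, nsmul_eq_mul]
        _ ≤ ∑ i : Fin n, Q (v i) := Finset.sum_le_sum fun i _ => (hvQ i).le
    have h2 : ∑ i : Fin n, Q (v i)
        = ∫⁻ ω in K, ∑ i : Fin n, (‖⟪F ω, v i⟫‖₊ : ENNReal) ^ 2 ∂μ := by
      rw [lintegral_finset_sum]
      intro i _
      exact ((hF_meas (v i)).nnnorm.coe_nnreal_ennreal).pow_const 2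
    have h3 : ∫⁻ ω in K, ∑ i : Fin n, (‖⟪F ω, v i⟫‖₊ : ENNReal) ^ 2 ∂μ
        ≤ ENNReal.ofReal (L ^ 2) * μ K := by
      have hae : ∀ᵐ ω ∂(μ.restrict K),
          ∑ i : Fin n, (‖⟪F ω, v i⟫‖₊ : ENNReal) ^ 2 ≤ ENNReal.ofReal (L ^ 2) := by
        filter_upwards [ae_restrict_of_ae hFb] with ω hω
        have e1 : ∑ i : Fin n, (‖⟪F ω, v i⟫‖₊ : ENNReal) ^ 2
            = ENNReal.ofReal (∑ i : Fin n, ‖⟪F ω, v i⟫‖ ^ 2) := by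
          rw [ENNReal.ofReal_sum_of_nonneg (fun i _ => by positivity)]
          refine Finset.sum_congr rfl fun i _ => ?_
          rw [← enorm_eq_nnnorm, ← ofReal_norm, ← ENNReal.ofReal_pow (norm_nonneg _)]
        rw [e1]
        apply ENNReal.ofReal_le_ofReal
        have e2 : ∑ i : Fin n, ‖⟪F ω, v i⟫‖ ^ 2 = ∑ i : Fin n, ‖⟪v i, F ω⟫‖ ^ 2 := by
          refine Finset.sum_congr rfl fun i _ => by rw [norm_inner_symm]
        rw [e2]
        calc ∑ i : Fin n, ‖⟪v i, F ω⟫‖ ^ 2 ≤ ‖F ω‖ ^ 2 := hv.sum_inner_products_le _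
          _ ≤ L ^ 2 := by
              have : (0:ℝ) ≤ ‖F ω‖ := norm_nonneg _
              nlinarith
      calc ∫⁻ ω in K, ∑ i : Fin n, (‖⟪F ω, v i⟫‖₊ : ENNReal) ^ 2 ∂μ
          ≤ ∫⁻ _ω in K, ENNReal.ofReal (L ^ 2) ∂μ := lintegral_mono_ae hae
        _ = ENNReal.ofReal (L ^ 2) * μ K := by rw [setLIntegral_const]
    exact h1.trans (h2 ▸ h3)
  -- the set of achievable sizes
  set Nset : Set ℕ := {n | ∃ v : Fin n → H, Orthonormal ℂ v ∧ ∀ i, δ < Q (v i)} with hNset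
  have hne : (0 : ℕ) ∈ Nset := by
    refine ⟨Fin.elim0, ⟨fun i => i.elim0, fun i => i.elim0⟩, fun i => i.elim0⟩
  have hbdd : BddAbove Nset := by
    set X : ENNReal := ENNReal.ofReal (L ^ 2) * μ K / δ with hX
    refine ⟨⌈X.toReal⌉₊, fun n hn => ?_⟩
    obtain ⟨v, hv, hvQ⟩ := hn
    have h1 : (n : ENNReal) ≤ X :=
      ENNReal.le_div_iff_mul_le (Or.inl hδ0) (Or.inr (by
        exact ENNReal.mul_ne_top ENNReal.ofReal_ne_top hK)) |>.2 (key n v hv hvQ)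
    have h2 : X ≠ ⊤ := by
      exact (ENNReal.div_lt_top (ENNReal.mul_ne_top ENNReal.ofReal_ne_top hK) hδ0).ne
    have h3 : (n : ℝ) ≤ X.toReal := by
      have := ENNReal.toReal_mono h2 h1
      simpa using this
    exact_mod_cast h3.trans (Nat.le_ceil _)
  set nstar := sSup Nset with hnstar
  obtain ⟨v, hv, hvQ⟩ := Nat.sSup_mem ⟨0, hne⟩ hbdd
  refine ⟨nstar, v, hv, ?_⟩
  intro f hf
  by_contra hcon
  push_neg at hcon
  have hf0 : f ≠ 0 := by
    rintro rfl
    simp [hQ] at hcon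
  set t : ENNReal := (‖f‖₊ : ENNReal) with ht
  have ht0 : t ≠ 0 := by
    simpa [ht] using hf0
  have httop : t ≠ ⊤ := ENNReal.coe_ne_top
  set c : ℂ := ((‖f‖ : ℂ))⁻¹ with hc
  set w : H := c • f with hw
  have hwnorm : ‖w‖ = 1 := norm_smul_inv_norm hf0
  have hcnn : (‖c‖₊ : ENNReal) = t⁻¹ := by
    rw [hc, ht, nnnorm_inv, Complex.nnnorm_real, nnnorm_norm,
      ENNReal.coe_inv (by simpa using hf0)]
  have hQw : Q w = t⁻¹ ^ 2 * Q f := by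
    rw [hQ]
    simp only [hw, inner_smul_right, nnnorm_mul, ENNReal.coe_mul, mul_pow]
    rw [lintegral_const_mul' _ _ (ENNReal.pow_ne_top ENNReal.coe_ne_top), hcnn]
  have hQwgt : δ < Q w := by
    have h1 : (t ^ 2)⁻¹ * (δ * t ^ 2) < (t ^ 2)⁻¹ * Q f := by
      rw [ENNReal.mul_lt_mul_iff_right (by simp [pow_eq_zero_iff, ht0, httop]) (by simp [ht0])]
      exact hcon
    have h2 : (t ^ 2)⁻¹ * (δ * t ^ 2) = δ := by
      rw [mul_comm δ, ← mul_assoc, ENNReal.inv_mul_cancel (by simp [pow_eq_zero_iff, ht0]) (by simp [httop]), one_mul]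
    rw [hQw, ← ENNReal.inv_pow]
    rw [h2] at h1
    exact h1
  have hmem : nstar + 1 ∈ Nset := by
    refine ⟨Fin.snoc v w, ⟨?_, ?_⟩, ?_⟩
    · intro i
      refine Fin.lastCases ?_ ?_ i
      · simpa [Fin.snoc_last] using hwnorm
      · intro j; simpa [Fin.snoc_castSucc] using hv.1 j
    · intro i j hij
      rcases Fin.eq_castSucc_or_eq_last i with ⟨i', rfl⟩ | rfl <;>
        rcases Fin.eq_castSucc_or_eq_last j with ⟨j', rfl⟩ | rfl
      · simp only [Fin.snoc_castSucc]
        exact hv.2 (fun h => hij (by rw [h]))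
      · simp only [Fin.snoc_castSucc, Fin.snoc_last, hw, inner_smul_right, hf i', mul_zero]
      · simp only [Fin.snoc_castSucc, Fin.snoc_last, hw, inner_smul_left]
        rw [← inner_conj_symm, hf j', map_zero, mul_zero]
      · exact absurd rfl hij
    · intro i
      refine Fin.lastCases ?_ ?_ i
      · simpa [Fin.snoc_last] using hQwgt
      · intro j; simpa [Fin.snoc_castSucc] using hvQ j
  have : nstar + 1 ≤ nstar := hnstar ▸ le_csSup hbdd hmem
  exact Nat.not_succ_le_self _ this
section helpers

lemma aux_findim_compact {E F : Type} [NormedAddCommGroup E] [NormedSpace ℂ E]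
    [FiniteDimensional ℂ E] [NormedAddCommGroup F] [NormedSpace ℂ F]
    (S : E →L[ℂ] F) : IsCompactOperator S := by
  refine ⟨S '' Metric.closedBall 0 1, (isCompact_closedBall 0 1).image S.continuous, ?_⟩
  exact Filter.mem_of_superset (Metric.closedBall_mem_nhds 0 one_pos)
    (Set.subset_preimage_image _ _)

lemma aux_proj_compact {H : Type} [NormedAddCommGroup H] [InnerProductSpace ℂ H]
    (U : Submodule ℂ H) [FiniteDimensional ℂ U] :
    IsCompactOperator (U.subtypeL.comp (U.orthogonalProjectionOnto)) := by
  haveI : CompleteSpace U := FiniteDimensional.complete ℂ U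
  exact (aux_findim_compact U.subtypeL).comp_clm (U.orthogonalProjectionOnto)

lemma aux_norm_sub_proj_le {H : Type} [NormedAddCommGroup H] [InnerProductSpace ℂ H]
    (U : Submodule ℂ H) [U.HasOrthogonalProjection] (f : H) :
    ‖f - (U.orthogonalProjectionOnto f : H)‖ ≤ ‖f‖ := by
  have h0 : ⟪((U.orthogonalProjectionOnto f : H)), f - (U.orthogonalProjectionOnto f : H)⟫ = 0 :=
    (Submodule.mem_orthogonal U _).1 (Submodule.sub_starProjection_mem_orthogonal (K := U) f) _
      (U.orthogonalProjectionOnto f).2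
  have h1 := norm_add_sq_eq_norm_sq_add_norm_sq_of_inner_eq_zero
    ((U.orthogonalProjectionOnto f : H)) (f - (U.orthogonalProjectionOnto f : H)) h0
  have heq : ((U.orthogonalProjectionOnto f : H)) + (f - (U.orthogonalProjectionOnto f : H)) = f := by
    abel
  rw [heq] at h1
  nlinarith [norm_nonneg (f - (U.orthogonalProjectionOnto f : H)), norm_nonneg f,
    norm_nonneg ((U.orthogonalProjectionOnto f : H))]

lemma aux_opnorm_le {H : Type} [NormedAddCommGroup H] [InnerProductSpace ℂ H]
    (S : H →L[ℂ] H) {c : ℝ} (hc : 0 ≤ c)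
    (h : ∀ f g : H, ‖⟪g, S f⟫‖ ≤ c * (‖f‖ * ‖g‖)) : ‖S‖ ≤ c := by
  refine S.opNorm_le_bound hc fun f => ?_
  have hf := h f (S f)
  rw [inner_self_eq_norm_sq_to_K, norm_pow, RCLike.norm_ofReal, abs_norm] at hf
  rcases eq_or_lt_of_le (norm_nonneg (S f)) with h0 | h0
  · rw [← h0]; positivity
  · have h3 : ‖S f‖ * ‖S f‖ ≤ (c * ‖f‖) * ‖S f‖ := by nlinarith
    exact le_of_mul_le_mul_right h3 h0

lemma aux_compact_of_approx {H : Type} [NormedAddCommGroup H] [InnerProductSpace ℂ H]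
    [CompleteSpace H] (M : H →L[ℂ] H) (r₀ : ℝ)
    (h : ∀ ε : ℝ, 0 < ε → ∃ T : H →L[ℂ] H, IsCompactOperator T ∧ ‖M - T‖ ≤ ε * r₀) :
    IsCompactOperator M := by
  have hcl : IsClosed {T : H →L[ℂ] H | IsCompactOperator T} :=
    isClosed_setOf_isCompactOperator
  refine hcl.closure_subset ?_
  rw [Metric.mem_closure_iff]
  intro ε hε
  obtain ⟨T, hT, hMT⟩ := h (ε / (|r₀| + 1)) (by positivity)
  refine ⟨T, hT, ?_⟩
  rw [dist_eq_norm]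
  have hd : (0:ℝ) < |r₀| + 1 := by positivity
  calc ‖M - T‖ ≤ ε / (|r₀| + 1) * r₀ := hMT
    _ ≤ ε / (|r₀| + 1) * |r₀| := by
        exact mul_le_mul_of_nonneg_left (le_abs_self r₀) (by positivity)
    _ < ε := by
        rw [div_mul_eq_mul_div, div_lt_iff₀ hd]
        have : |r₀| < |r₀| + 1 := by linarith
        calc ε * |r₀| < ε * (|r₀| + 1) := by
              exact mul_lt_mul_of_pos_left this hε
          _ = ε * (|r₀| + 1) := rfl

lemma aux_sq_helper {H : Type} [NormedAddCommGroup H] {e : ℝ} (he : 0 ≤ e) (x : H) :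
    ENNReal.ofReal (e ^ 2) * ((‖x‖₊ : ENNReal)) ^ 2 = ENNReal.ofReal (e * ‖x‖) ^ 2 := by
  rw [← ENNReal.ofReal_pow (by positivity), mul_pow, ENNReal.ofReal_mul (by positivity)]
  congr 1
  rw [← enorm_eq_nnnorm, ← ofReal_norm, ← ENNReal.ofReal_pow (norm_nonneg x)]

end helpers
theorem caseF
    {Ω : Type} [MeasurableSpace Ω] (μ : Measure Ω)
    {H : Type} [NormedAddCommGroup H] [InnerProductSpace ℂ H] [CompleteSpace H]
    (F G : Ω → H) (B_F B_G : ℝ) (hBF : 0 < B_F) (hBG : 0 < B_G)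
    (hF_meas : ∀ f : H, Measurable fun ω => ⟪F ω, f⟫)
    (hF_bessel : ∀ f : H,
      ∫⁻ ω, (‖⟪F ω, f⟫‖₊ : ENNReal) ^ 2 ∂μ ≤ ENNReal.ofReal (B_F * ‖f‖ ^ 2))
    (hG_meas : ∀ f : H, Measurable fun ω => ⟪G ω, f⟫)
    (hG_bessel : ∀ f : H,
      ∫⁻ ω, (‖⟪G ω, f⟫‖₊ : ENNReal) ^ 2 ∂μ ≤ ENNReal.ofReal (B_G * ‖f‖ ^ 2))
    (L : ℝ) (hL : 0 < L)
    (hFb : ∀ᵐ ω ∂μ, ‖F ω‖ ≤ L)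
    (m : Ω → ℂ) (hm_meas : Measurable m)
    {C' : ℝ} (hC'0 : 0 ≤ C') (hmC : ∀ᵐ ω ∂μ, ‖m ω‖ ≤ C')
    (hm_vanish : ∀ ε : ℝ, 0 < ε → ∃ K : Set Ω, MeasurableSet K ∧ μ K < ⊤ ∧
      ∀ᵐ ω ∂μ, ω ∉ K → ‖m ω‖ ≤ ε)
    (M : H →L[ℂ] H)
    (hM : ∀ f g : H, ⟪g, M f⟫ = ∫ ω, m ω * ⟪F ω, f⟫ * ⟪g, G ω⟫ ∂μ) :
    IsCompactOperator M := by
  refine aux_compact_of_approx M ((Real.sqrt B_F + C') * Real.sqrt B_G) fun ε hε => ?_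
  obtain ⟨K, hKmeas, hKfin, hKm⟩ := hm_vanish ε hε
  have hδ0 : ENNReal.ofReal (ε ^ 2) ≠ 0 := by
    simp [ENNReal.ofReal_eq_zero, not_le]
    positivity
  obtain ⟨n, v, hv, hproj⟩ := aux_exists_proj μ F hF_meas L hFb K hKfin.ne hδ0
  set U : Submodule ℂ H := Submodule.span ℂ (Set.range v) with hU
  haveI : FiniteDimensional ℂ U := FiniteDimensional.span_of_finite ℂ (Set.finite_range v)
  haveI : CompleteSpace U := FiniteDimensional.complete ℂ U
  set P : H →L[ℂ] H := U.subtypeL.comp (U.orthogonalProjectionOnto) with hP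
  refine ⟨M.comp P, ?_, ?_⟩
  · have h1 : IsCompactOperator P := aux_proj_compact U
    exact h1.continuous_comp M.continuous
  · refine aux_opnorm_le _ (by positivity) fun f g => ?_
    set f' : H := f - P f with hf'
    have hPf : P f = (U.orthogonalProjectionOnto f : H) := rfl
    have hforth : ∀ i, ⟪v i, f'⟫ = 0 := by
      intro i
      refine (Submodule.mem_orthogonal U f').1 ?_ (v i)
        (Submodule.subset_span (Set.mem_range_self i))
      rw [hf', hPf]
      exact Submodule.sub_starProjection_mem_orthogonal (K := U) f
    have hf'le : ‖f'‖ ≤ ‖f‖ := by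
      rw [hf', hPf]; exact aux_norm_sub_proj_le U f
    have hdiff : ⟪g, (M - M.comp P) f⟫ = ∫ ω, m ω * ⟪F ω, f'⟫ * ⟪g, G ω⟫ ∂μ := by
      have e1 : (M - M.comp P) f = M f - M (P f) := rfl
      rw [e1, inner_sub_right, hM f g, hM (P f) g,
        ← integral_sub
          (aux_integrable hBF.le hBG.le hF_meas hF_bessel hG_meas hG_bessel hm_meas hmC f g)
          (aux_integrable hBF.le hBG.le hF_meas hF_bessel hG_meas hG_bessel hm_meas hmC (P f) g)]
      congr 1
      funext ω
      rw [hf', inner_sub_right]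
      ring
    have hK1 : ∫⁻ ω in K, (‖⟪F ω, f'⟫‖₊ : ENNReal) ^ 2 ∂μ
        ≤ ENNReal.ofReal (ε * ‖f‖) ^ 2 := by
      refine (hproj f' hforth).trans ?_
      calc ENNReal.ofReal (ε ^ 2) * (‖f'‖₊ : ENNReal) ^ 2
          ≤ ENNReal.ofReal (ε ^ 2) * (‖f‖₊ : ENNReal) ^ 2 := by
            refine mul_le_mul_right (pow_le_pow_left' ?_ 2) _
            exact_mod_cast hf'le
        _ = ENNReal.ofReal (ε * ‖f‖) ^ 2 := aux_sq_helper (by positivity) f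
    have hK2 : ∫⁻ ω in K, (‖⟪G ω, g⟫‖₊ : ENNReal) ^ 2 ∂μ
        ≤ ENNReal.ofReal (Real.sqrt B_G * ‖g‖) ^ 2 :=
      (setLIntegral_le_lintegral _ _).trans
        ((hG_bessel g).trans_eq (aux_ofReal_sq hBG.le (norm_nonneg _)))
    have hest := aux_est μ hBF.le hBG.le hF_meas hF_bessel hG_meas hG_bessel hm_meas hC'0 hmC
      hε hKmeas hKm f' g (by positivity : (0:ℝ) ≤ ε * ‖f‖)
      (by positivity : (0:ℝ) ≤ Real.sqrt B_G * ‖g‖) hK1 hK2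
    rw [hdiff]
    refine hest.trans ?_
    calc ε * ((Real.sqrt B_F * ‖f'‖) * (Real.sqrt B_G * ‖g‖))
          + C' * ((ε * ‖f‖) * (Real.sqrt B_G * ‖g‖))
        ≤ ε * ((Real.sqrt B_F * ‖f‖) * (Real.sqrt B_G * ‖g‖))
          + C' * ((ε * ‖f‖) * (Real.sqrt B_G * ‖g‖)) := by
          gcongr
        _ = ε * ((Real.sqrt B_F + C') * Real.sqrt B_G) * (‖f‖ * ‖g‖) := by ring
theorem caseG
    {Ω : Type} [MeasurableSpace Ω] (μ : Measure Ω)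
    {H : Type} [NormedAddCommGroup H] [InnerProductSpace ℂ H] [CompleteSpace H]
    (F G : Ω → H) (B_F B_G : ℝ) (hBF : 0 < B_F) (hBG : 0 < B_G)
    (hF_meas : ∀ f : H, Measurable fun ω => ⟪F ω, f⟫)
    (hF_bessel : ∀ f : H,
      ∫⁻ ω, (‖⟪F ω, f⟫‖₊ : ENNReal) ^ 2 ∂μ ≤ ENNReal.ofReal (B_F * ‖f‖ ^ 2))
    (hG_meas : ∀ f : H, Measurable fun ω => ⟪G ω, f⟫)
    (hG_bessel : ∀ f : H,
      ∫⁻ ω, (‖⟪G ω, f⟫‖₊ : ENNReal) ^ 2 ∂μ ≤ ENNReal.ofReal (B_G * ‖f‖ ^ 2))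
    (L : ℝ) (hL : 0 < L)
    (hGb : ∀ᵐ ω ∂μ, ‖G ω‖ ≤ L)
    (m : Ω → ℂ) (hm_meas : Measurable m)
    {C' : ℝ} (hC'0 : 0 ≤ C') (hmC : ∀ᵐ ω ∂μ, ‖m ω‖ ≤ C')
    (hm_vanish : ∀ ε : ℝ, 0 < ε → ∃ K : Set Ω, MeasurableSet K ∧ μ K < ⊤ ∧
      ∀ᵐ ω ∂μ, ω ∉ K → ‖m ω‖ ≤ ε)
    (M : H →L[ℂ] H)
    (hM : ∀ f g : H, ⟪g, M f⟫ = ∫ ω, m ω * ⟪F ω, f⟫ * ⟪g, G ω⟫ ∂μ) :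
    IsCompactOperator M := by
  refine aux_compact_of_approx M (Real.sqrt B_F * (Real.sqrt B_G + C')) fun ε hε => ?_
  obtain ⟨K, hKmeas, hKfin, hKm⟩ := hm_vanish ε hε
  have hδ0 : ENNReal.ofReal (ε ^ 2) ≠ 0 := by
    simp [ENNReal.ofReal_eq_zero, not_le]
    positivity
  obtain ⟨n, v, hv, hproj⟩ := aux_exists_proj μ G hG_meas L hGb K hKfin.ne hδ0
  set U : Submodule ℂ H := Submodule.span ℂ (Set.range v) with hU
  haveI : FiniteDimensional ℂ U := FiniteDimensional.span_of_finite ℂ (Set.finite_range v)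
  haveI : CompleteSpace U := FiniteDimensional.complete ℂ U
  set P : H →L[ℂ] H := U.subtypeL.comp (U.orthogonalProjectionOnto) with hP
  refine ⟨P.comp M, ?_, ?_⟩
  · have h1 : IsCompactOperator P := aux_proj_compact U
    exact h1.comp_clm M
  · refine aux_opnorm_le _ (by positivity) fun f g => ?_
    set g' : H := g - P g with hg'
    have hPg : P g = (U.orthogonalProjectionOnto g : H) := rfl
    have hgorth : ∀ i, ⟪v i, g'⟫ = 0 := by
      intro i
      refine (Submodule.mem_orthogonal U g').1 ?_ (v i)
        (Submodule.subset_span (Set.mem_range_self i))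
      rw [hg', hPg]
      exact Submodule.sub_starProjection_mem_orthogonal (K := U) g
    have hg'le : ‖g'‖ ≤ ‖g‖ := by
      rw [hg', hPg]; exact aux_norm_sub_proj_le U g
    have hPsym : ∀ x y : H, ⟪x, P y⟫ = ⟪P x, y⟫ := fun x y =>
      (Submodule.inner_starProjection_left_eq_right U x y).symm
    have hdiff : ⟪g, (M - P.comp M) f⟫ = ∫ ω, m ω * ⟪F ω, f⟫ * ⟪g', G ω⟫ ∂μ := by
      have e1 : (M - P.comp M) f = M f - P (M f) := rfl
      rw [e1, inner_sub_right, hPsym g (M f), hM f g, hM f (P g),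
        ← integral_sub
          (aux_integrable hBF.le hBG.le hF_meas hF_bessel hG_meas hG_bessel hm_meas hmC f g)
          (aux_integrable hBF.le hBG.le hF_meas hF_bessel hG_meas hG_bessel hm_meas hmC f (P g))]
      congr 1
      funext ω
      rw [hg', inner_sub_left]
      ring
    have hK1 : ∫⁻ ω in K, (‖⟪F ω, f⟫‖₊ : ENNReal) ^ 2 ∂μ
        ≤ ENNReal.ofReal (Real.sqrt B_F * ‖f‖) ^ 2 :=
      (setLIntegral_le_lintegral _ _).trans
        ((hF_bessel f).trans_eq (aux_ofReal_sq hBF.le (norm_nonneg _)))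
    have hK2 : ∫⁻ ω in K, (‖⟪G ω, g'⟫‖₊ : ENNReal) ^ 2 ∂μ
        ≤ ENNReal.ofReal (ε * ‖g‖) ^ 2 := by
      refine (hproj g' hgorth).trans ?_
      calc ENNReal.ofReal (ε ^ 2) * (‖g'‖₊ : ENNReal) ^ 2
          ≤ ENNReal.ofReal (ε ^ 2) * (‖g‖₊ : ENNReal) ^ 2 := by
            refine mul_le_mul_right (pow_le_pow_left' ?_ 2) _
            exact_mod_cast hg'le
        _ = ENNReal.ofReal (ε * ‖g‖) ^ 2 := aux_sq_helper (by positivity) g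
    have hest := aux_est μ hBF.le hBG.le hF_meas hF_bessel hG_meas hG_bessel hm_meas hC'0 hmC
      hε hKmeas hKm f g' (by positivity : (0:ℝ) ≤ Real.sqrt B_F * ‖f‖)
      (by positivity : (0:ℝ) ≤ ε * ‖g‖) hK1 hK2
    rw [hdiff]
    refine hest.trans ?_
    calc ε * ((Real.sqrt B_F * ‖f‖) * (Real.sqrt B_G * ‖g'‖))
          + C' * ((Real.sqrt B_F * ‖f‖) * (ε * ‖g‖))
        ≤ ε * ((Real.sqrt B_F * ‖f‖) * (Real.sqrt B_G * ‖g‖))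
          + C' * ((Real.sqrt B_F * ‖f‖) * (ε * ‖g‖)) := by
          gcongr
        _ = ε * (Real.sqrt B_F * (Real.sqrt B_G + C')) * (‖f‖ * ‖g‖) := by ring

/-- If `F, G` are Bessel mappings, one of which is (essentially) norm bounded, and `m` is an
essentially bounded measurable symbol that vanishes at infinity, then the continuous
Bessel multiplier `M_{m,F,G}` is a compact operator.
In Mathlib's convention the paper's `⟨x, y⟩` is `⟪y, x⟫`. -/
theorem multiplier_compact_of_vanishing_symbol
    {Ω : Type} [MeasurableSpace Ω] (μ : Measure Ω)
    {H : Type} [NormedAddCommGroup H] [InnerProductSpace ℂ H] [CompleteSpace H]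
    (F G : Ω → H) (B_F B_G : ℝ) (hBF : 0 < B_F) (hBG : 0 < B_G)
    (hF_meas : ∀ f : H, Measurable fun ω => ⟪F ω, f⟫)
    (hF_bessel : ∀ f : H,
      ∫⁻ ω, (‖⟪F ω, f⟫‖₊ : ENNReal) ^ 2 ∂μ ≤ ENNReal.ofReal (B_F * ‖f‖ ^ 2))
    (hG_meas : ∀ f : H, Measurable fun ω => ⟪G ω, f⟫)
    (hG_bessel : ∀ f : H,
      ∫⁻ ω, (‖⟪G ω, f⟫‖₊ : ENNReal) ^ 2 ∂μ ≤ ENNReal.ofReal (B_G * ‖f‖ ^ 2))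
    (L : ℝ) (hL : 0 < L)
    (hbounded : (∀ᵐ ω ∂μ, ‖F ω‖ ≤ L) ∨ (∀ᵐ ω ∂μ, ‖G ω‖ ≤ L))
    (m : Ω → ℂ) (hm_meas : Measurable m)
    (hm_bdd : ∃ C : ℝ, ∀ᵐ ω ∂μ, ‖m ω‖ ≤ C)
    (hm_vanish : ∀ ε : ℝ, 0 < ε → ∃ K : Set Ω, MeasurableSet K ∧ μ K < ⊤ ∧
      ∀ᵐ ω ∂μ, ω ∉ K → ‖m ω‖ ≤ ε)
    (M : H →L[ℂ] H)
    (hM : ∀ f g : H, ⟪g, M f⟫ = ∫ ω, m ω * ⟪F ω, f⟫ * ⟪g, G ω⟫ ∂μ) :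
    IsCompactOperator M := by
  obtain ⟨C, hC⟩ := hm_bdd
  have hC' : ∀ᵐ ω ∂μ, ‖m ω‖ ≤ max C 0 := hC.mono fun ω h => h.trans (le_max_left _ _)
  rcases hbounded with hFb | hGb
  · exact caseF μ F G B_F B_G hBF hBG hF_meas hF_bessel hG_meas hG_bessel L hL hFb m hm_meas
      (le_max_right _ _) hC' hm_vanish M hM
  · exact caseG μ F G B_F B_G hBF hBG hF_meas hF_bessel hG_meas hG_bessel L hL hGb m hm_meas
      (le_max_right _ _) hC' hm_vanish M hM
end

section
/- Let F and G be Bessel mappings for H with respect to (Ω, μ) that are norm bounded by L_F and L_G respectively, and let m ∈ L¹(Ω, μ). Then there exists a bounded linear operator M : H → H such that for all f, g ∈ H the function ω ↦ m(ω)⟨f, F(ω)⟩⟨G(ω), g⟩ is integrable and ⟨M f, g⟩ = ∫_Ω m(ω)⟨f, F(ω)⟩⟨G(ω), g⟩ dμ(ω); moreover ‖M‖ ≤ ‖m‖₁ L_F L_G. -/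
open MeasureTheory ComplexConjugate

local notation "⟪" x ", " y "⟫" => @inner ℂ _ _ x y

/-- If `F, G` are norm-bounded Bessel mappings with norm bounds `L_F, L_G` and `m ∈ L¹(Ω, μ)`,
then the continuous multiplier `M_{m,F,G}` is a well defined bounded operator with
`‖M‖ ≤ ‖m‖₁ L_F L_G`.  In Mathlib's convention the paper's `⟨x, y⟩` is `⟪y, x⟫`. -/
theorem multiplier_bounded_of_L1_symbol
    {Ω : Type} [MeasurableSpace Ω] (μ : Measure Ω)
    {H : Type} [NormedAddCommGroup H] [InnerProductSpace ℂ H] [CompleteSpace H]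
    (F G : Ω → H) (B_F B_G : ℝ) (hBF : 0 < B_F) (hBG : 0 < B_G)
    (hF_meas : ∀ f : H, Measurable fun ω => ⟪F ω, f⟫)
    (hF_bessel : ∀ f : H,
      ∫⁻ ω, (‖⟪F ω, f⟫‖₊ : ENNReal) ^ 2 ∂μ ≤ ENNReal.ofReal (B_F * ‖f‖ ^ 2))
    (hG_meas : ∀ f : H, Measurable fun ω => ⟪G ω, f⟫)
    (hG_bessel : ∀ f : H,
      ∫⁻ ω, (‖⟪G ω, f⟫‖₊ : ENNReal) ^ 2 ∂μ ≤ ENNReal.ofReal (B_G * ‖f‖ ^ 2))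
    (L_F L_G : ℝ)
    (hF_bdd : ∀ᵐ ω ∂μ, ‖F ω‖ ≤ L_F)
    (hG_bdd : ∀ᵐ ω ∂μ, ‖G ω‖ ≤ L_G)
    (m : Ω → ℂ) (hm : Integrable m μ) :
    ∃ M : H →L[ℂ] H,
      (∀ f g : H,
        Integrable (fun ω => m ω * ⟪F ω, f⟫ * ⟪g, G ω⟫) μ ∧
        ⟪g, M f⟫ = ∫ ω, m ω * ⟪F ω, f⟫ * ⟪g, G ω⟫ ∂μ) ∧
      ‖M‖ ≤ (∫ ω, ‖m ω‖ ∂μ) * L_F * L_G := by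
  classical
  rcases eq_or_ne μ 0 with rfl | hμ
  · exact ⟨0, fun f g => ⟨by simp [integrable_zero_measure], by simp⟩, by simp⟩
  haveI : (ae μ).NeBot := ae_neBot.2 hμ
  have hLF : 0 ≤ L_F := by
    obtain ⟨ω, hω⟩ := hF_bdd.exists
    exact (norm_nonneg _).trans hω
  have hLG : 0 ≤ L_G := by
    obtain ⟨ω, hω⟩ := hG_bdd.exists
    exact (norm_nonneg _).trans hω
  have hm1 : 0 ≤ ∫ ω, ‖m ω‖ ∂μ := integral_nonneg fun ω => norm_nonneg _
  set C : ℝ := (∫ ω, ‖m ω‖ ∂μ) * L_F * L_G with hCdef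
  have hC0 : 0 ≤ C := mul_nonneg (mul_nonneg hm1 hLF) hLG
  -- pointwise bound
  have hpt : ∀ f g : H, ∀ᵐ ω ∂μ,
      ‖m ω * ⟪F ω, f⟫ * ⟪g, G ω⟫‖ ≤ ‖m ω‖ * (L_F * ‖f‖ * (‖g‖ * L_G)) := by
    intro f g
    filter_upwards [hF_bdd, hG_bdd] with ω h1 h2
    have e1 : ‖⟪F ω, f⟫‖ ≤ L_F * ‖f‖ :=
      (norm_inner_le_norm _ _).trans (mul_le_mul_of_nonneg_right h1 (norm_nonneg f))
    have e2 : ‖⟪g, G ω⟫‖ ≤ ‖g‖ * L_G :=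
      (norm_inner_le_norm _ _).trans (mul_le_mul_of_nonneg_left h2 (norm_nonneg g))
    calc ‖m ω * ⟪F ω, f⟫ * ⟪g, G ω⟫‖
        = ‖m ω‖ * ‖⟪F ω, f⟫‖ * ‖⟪g, G ω⟫‖ := by rw [norm_mul, norm_mul]
      _ ≤ ‖m ω‖ * (L_F * ‖f‖) * (‖g‖ * L_G) :=
          mul_le_mul (mul_le_mul_of_nonneg_left e1 (norm_nonneg _)) e2 (norm_nonneg _)
            (mul_nonneg (norm_nonneg _) (mul_nonneg hLF (norm_nonneg f)))
      _ = ‖m ω‖ * (L_F * ‖f‖ * (‖g‖ * L_G)) := by ring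
  -- integrability
  have key : ∀ f g : H, Integrable (fun ω => m ω * ⟪F ω, f⟫ * ⟪g, G ω⟫) μ := by
    intro f g
    have hmg : Measurable fun ω => ⟪g, G ω⟫ := by
      have h1 : Measurable fun ω => conj ⟪G ω, g⟫ :=
        Complex.continuous_conj.measurable.comp (hG_meas g)
      simpa only [inner_conj_symm] using h1
    have hms : AEStronglyMeasurable (fun ω => m ω * ⟪F ω, f⟫ * ⟪g, G ω⟫) μ :=
      (hm.aestronglyMeasurable.mul (hF_meas f).aestronglyMeasurable).mul
        hmg.aestronglyMeasurable
    exact (hm.norm.mul_const (L_F * ‖f‖ * (‖g‖ * L_G))).mono' hms (hpt f g)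
  -- integral bound
  have hbound : ∀ f g : H,
      ‖∫ ω, m ω * ⟪F ω, f⟫ * ⟪g, G ω⟫ ∂μ‖ ≤ C * ‖f‖ * ‖g‖ := by
    intro f g
    calc ‖∫ ω, m ω * ⟪F ω, f⟫ * ⟪g, G ω⟫ ∂μ‖
        ≤ ∫ ω, ‖m ω * ⟪F ω, f⟫ * ⟪g, G ω⟫‖ ∂μ := norm_integral_le_integral_norm _
      _ ≤ ∫ ω, ‖m ω‖ * (L_F * ‖f‖ * (‖g‖ * L_G)) ∂μ :=
          integral_mono_ae (key f g).norm
            (hm.norm.mul_const (L_F * ‖f‖ * (‖g‖ * L_G))) (hpt f g)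
      _ = (∫ ω, ‖m ω‖ ∂μ) * (L_F * ‖f‖ * (‖g‖ * L_G)) := integral_mul_const _ _
      _ = C * ‖f‖ * ‖g‖ := by rw [hCdef]; ring
  -- the family of continuous linear functionals
  let φ : H → (H →L[ℂ] ℂ) := fun f =>
    LinearMap.mkContinuous
      { toFun := fun g => conj (∫ ω, m ω * ⟪F ω, f⟫ * ⟪g, G ω⟫ ∂μ)
        map_add' := fun g₁ g₂ => by
          rw [← map_add]
          congr 1
          rw [← integral_add (key f g₁) (key f g₂)]
          congr 1
          funext ω
          rw [inner_add_left]
          ring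
        map_smul' := fun c g => by
          simp only [RingHom.id_apply, smul_eq_mul]
          have h : (fun ω => m ω * ⟪F ω, f⟫ * ⟪c • g, G ω⟫)
              = fun ω => conj c • (m ω * ⟪F ω, f⟫ * ⟪g, G ω⟫) := by
            funext ω
            rw [inner_smul_left]
            simp only [smul_eq_mul]
            ring
          rw [h, integral_smul, smul_eq_mul, map_mul, Complex.conj_conj] }
      (C * ‖f‖)
      (fun g => by
        dsimp only [LinearMap.coe_mk, AddHom.coe_mk]
        rw [RCLike.norm_conj]
        exact hbound f g)
  have hφ_apply : ∀ f g : H, φ f g = conj (∫ ω, m ω * ⟪F ω, f⟫ * ⟪g, G ω⟫ ∂μ) :=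
    fun f g => rfl
  have hMfg : ∀ f g : H,
      ⟪(InnerProductSpace.toDual ℂ H).symm (φ f), g⟫
        = conj (∫ ω, m ω * ⟪F ω, f⟫ * ⟪g, G ω⟫ ∂μ) := by
    intro f g
    rw [InnerProductSpace.toDual_symm_apply, hφ_apply]
  -- the linear map
  let M₀ : H →ₗ[ℂ] H :=
    { toFun := fun f => (InnerProductSpace.toDual ℂ H).symm (φ f)
      map_add' := fun f₁ f₂ => by
        apply ext_inner_right ℂ
        intro g
        rw [inner_add_left, hMfg, hMfg, hMfg, ← map_add]
        congr 1
        rw [← integral_add (key f₁ g) (key f₂ g)]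
        congr 1
        funext ω
        rw [inner_add_right]
        ring
      map_smul' := fun c f => by
        simp only [RingHom.id_apply]
        apply ext_inner_right ℂ
        intro g
        rw [inner_smul_left, hMfg, hMfg, ← map_mul]
        congr 1
        have h : (fun ω => m ω * ⟪F ω, c • f⟫ * ⟪g, G ω⟫)
            = fun ω => c • (m ω * ⟪F ω, f⟫ * ⟪g, G ω⟫) := by
          funext ω
          rw [inner_smul_right]
          simp only [smul_eq_mul]
          ring
        rw [h, integral_smul, smul_eq_mul] }
  have hM₀ : ∀ f : H, ‖M₀ f‖ ≤ C * ‖f‖ := by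
    intro f
    have h1 : ‖M₀ f‖ = ‖φ f‖ := (InnerProductSpace.toDual ℂ H).symm.norm_map (φ f)
    rw [h1]
    exact LinearMap.mkContinuous_norm_le _ (mul_nonneg hC0 (norm_nonneg f)) _
  refine ⟨M₀.mkContinuous C hM₀, fun f g => ⟨key f g, ?_⟩, ?_⟩
  · have h1 : ⟪(M₀.mkContinuous C hM₀) f, g⟫
        = conj (∫ ω, m ω * ⟪F ω, f⟫ * ⟪g, G ω⟫ ∂μ) := by
      rw [LinearMap.mkContinuous_apply]
      exact hMfg f g
    rw [← inner_conj_symm, h1, Complex.conj_conj]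
  · exact LinearMap.mkContinuous_norm_le _ hC0 _
end

section
/- Let F and G be Bessel mappings for H with respect to (Ω, μ) that are norm bounded by L_F and L_G respectively, let m ∈ L¹(Ω, μ), and let M : H → H be a bounded operator satisfying ⟨M f, g⟩ = ∫_Ω m(ω)⟨f, F(ω)⟩⟨G(ω), g⟩ dμ(ω) for all f, g ∈ H. Then for every orthonormal (Hilbert) basis (e_i)_{i∈I} of H one has ∑_{i∈I} |⟨M e_i, e_i⟩| ≤ ‖m‖₁ L_F L_G; in particular M is a trace class operator. -/
open MeasureTheory

local notation "⟪" x ", " y "⟫" => @inner ℂ _ _ x y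

/-- Trace-class property of multipliers with norm-bounded Bessel mappings and `L¹` symbol:
for every orthonormal (Hilbert) basis `(e_i)` of `H`, the family `|⟨M e_i, e_i⟩|` is summable
with `∑_i |⟨M e_i, e_i⟩| ≤ ‖m‖₁ L_F L_G`; in particular `M` is trace class.
In Mathlib's convention the paper's `⟨x, y⟩` is `⟪y, x⟫`. -/
theorem multiplier_trace_class_of_L1_symbol
    {Ω : Type} [MeasurableSpace Ω] (μ : Measure Ω)
    {H : Type} [NormedAddCommGroup H] [InnerProductSpace ℂ H] [CompleteSpace H]
    (F G : Ω → H) (B_F B_G : ℝ) (hBF : 0 < B_F) (hBG : 0 < B_G)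
    (hF_meas : ∀ f : H, Measurable fun ω => ⟪F ω, f⟫)
    (hF_bessel : ∀ f : H,
      ∫⁻ ω, (‖⟪F ω, f⟫‖₊ : ENNReal) ^ 2 ∂μ ≤ ENNReal.ofReal (B_F * ‖f‖ ^ 2))
    (hG_meas : ∀ f : H, Measurable fun ω => ⟪G ω, f⟫)
    (hG_bessel : ∀ f : H,
      ∫⁻ ω, (‖⟪G ω, f⟫‖₊ : ENNReal) ^ 2 ∂μ ≤ ENNReal.ofReal (B_G * ‖f‖ ^ 2))
    (L_F L_G : ℝ)
    (hF_bdd : ∀ᵐ ω ∂μ, ‖F ω‖ ≤ L_F)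
    (hG_bdd : ∀ᵐ ω ∂μ, ‖G ω‖ ≤ L_G)
    (m : Ω → ℂ) (hm : Integrable m μ)
    (M : H →L[ℂ] H)
    (hM_int : ∀ f g : H, Integrable (fun ω => m ω * ⟪F ω, f⟫ * ⟪g, G ω⟫) μ)
    (hM : ∀ f g : H, ⟪g, M f⟫ = ∫ ω, m ω * ⟪F ω, f⟫ * ⟪g, G ω⟫ ∂μ)
    (ι : Type) (e : HilbertBasis ι ℂ H) :
    Summable (fun i => ‖⟪e i, M (e i)⟫‖) ∧
    ∑' i, ‖⟪e i, M (e i)⟫‖ ≤ (∫ ω, ‖m ω‖ ∂μ) * L_F * L_G := by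
  classical
  have key : ∀ s : Finset ι,
      ∑ i ∈ s, ‖⟪e i, M (e i)⟫‖ ≤ (∫ ω, ‖m ω‖ ∂μ) * L_F * L_G := by
    intro s
    have step1 : ∀ i, ‖⟪e i, M (e i)⟫‖ ≤
        ∫ ω, ‖m ω‖ * ‖⟪F ω, e i⟫‖ * ‖⟪e i, G ω⟫‖ ∂μ := by
      intro i
      rw [hM]
      refine le_trans (norm_integral_le_integral_norm _) (le_of_eq ?_)
      congr 1 with ω
      simp [norm_mul]
    have hInt : ∀ i : ι,
        Integrable (fun ω => ‖m ω‖ * ‖⟪F ω, e i⟫‖ * ‖⟪e i, G ω⟫‖) μ := by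
      intro i
      have := (hM_int (e i) (e i)).norm
      simpa [norm_mul] using this
    calc ∑ i ∈ s, ‖⟪e i, M (e i)⟫‖
        ≤ ∑ i ∈ s, ∫ ω, ‖m ω‖ * ‖⟪F ω, e i⟫‖ * ‖⟪e i, G ω⟫‖ ∂μ :=
          Finset.sum_le_sum fun i _ => step1 i
      _ = ∫ ω, ∑ i ∈ s, ‖m ω‖ * ‖⟪F ω, e i⟫‖ * ‖⟪e i, G ω⟫‖ ∂μ :=
          (integral_finset_sum s fun i _ => hInt i).symm
      _ ≤ ∫ ω, ‖m ω‖ * (L_F * L_G) ∂μ := by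
          refine integral_mono_ae (integrable_finset_sum s fun i _ => hInt i)
            (hm.norm.mul_const _) ?_
          filter_upwards [hF_bdd, hG_bdd] with ω hF hG
          have hFn : (0:ℝ) ≤ ‖F ω‖ := norm_nonneg _
          have hGn : (0:ℝ) ≤ ‖G ω‖ := norm_nonneg _
          have CS : ∑ i ∈ s, ‖⟪F ω, e i⟫‖ * ‖⟪e i, G ω⟫‖ ≤ ‖F ω‖ * ‖G ω‖ := by
            have h1 := Finset.sum_mul_sq_le_sq_mul_sq s
              (fun i => ‖⟪e i, F ω⟫‖) (fun i => ‖⟪e i, G ω⟫‖)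
            have h2 : ∑ i ∈ s, ‖⟪e i, F ω⟫‖ ^ 2 ≤ ‖F ω‖ ^ 2 :=
              e.orthonormal.sum_inner_products_le (F ω)
            have h3 : ∑ i ∈ s, ‖⟪e i, G ω⟫‖ ^ 2 ≤ ‖G ω‖ ^ 2 :=
              e.orthonormal.sum_inner_products_le (G ω)
            have h4 : (0:ℝ) ≤ ∑ i ∈ s, ‖⟪e i, F ω⟫‖ * ‖⟪e i, G ω⟫‖ :=
              Finset.sum_nonneg fun i _ => mul_nonneg (norm_nonneg _) (norm_nonneg _)
            have h5 : ∑ i ∈ s, ‖⟪F ω, e i⟫‖ * ‖⟪e i, G ω⟫‖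
                = ∑ i ∈ s, ‖⟪e i, F ω⟫‖ * ‖⟪e i, G ω⟫‖ := by
              refine Finset.sum_congr rfl fun i _ => ?_
              rw [norm_inner_symm]
            rw [h5]
            have h6 : (∑ i ∈ s, ‖⟪e i, F ω⟫‖ ^ 2) * ∑ i ∈ s, ‖⟪e i, G ω⟫‖ ^ 2
                ≤ ‖F ω‖ ^ 2 * ‖G ω‖ ^ 2 := by
              refine mul_le_mul h2 h3 (Finset.sum_nonneg fun i _ => sq_nonneg _)
                (sq_nonneg _)
            nlinarith [mul_nonneg hFn hGn]
          have hLbd : ‖F ω‖ * ‖G ω‖ ≤ L_F * L_G :=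
            mul_le_mul hF hG hGn (le_trans hFn hF)
          calc ∑ i ∈ s, ‖m ω‖ * ‖⟪F ω, e i⟫‖ * ‖⟪e i, G ω⟫‖
              = ‖m ω‖ * ∑ i ∈ s, ‖⟪F ω, e i⟫‖ * ‖⟪e i, G ω⟫‖ := by
                rw [Finset.mul_sum]; refine Finset.sum_congr rfl fun i _ => ?_; ring
            _ ≤ ‖m ω‖ * (L_F * L_G) :=
                mul_le_mul_of_nonneg_left (CS.trans hLbd) (norm_nonneg _)
      _ = (∫ ω, ‖m ω‖ ∂μ) * L_F * L_G := by
          rw [integral_mul_const]; ring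
  have hsum : Summable (fun i => ‖⟪e i, M (e i)⟫‖) :=
    summable_of_sum_le (fun i => norm_nonneg _) key
  exact ⟨hsum, Summable.tsum_le_of_sum_le hsum key⟩
end

section
/- Let F and G be Bessel mappings for H with respect to (Ω, μ) with Bessel bounds B_F and B_G. Let m, m' ∈ L^∞(Ω, μ) and let M and M' be the bounded operators satisfying ⟨M f, g⟩ = ∫_Ω m(ω)⟨f, F(ω)⟩⟨G(ω), g⟩ dμ(ω) and ⟨M' f, g⟩ = ∫_Ω m'(ω)⟨f, F(ω)⟩⟨G(ω), g⟩ dμ(ω) for all f, g ∈ H. Then ‖M − M'‖ ≤ ‖m − m'‖_∞ √(B_F B_G); consequently, if (m⁽ⁿ⁾) is a sequence in L^∞(Ω, μ) with ‖m⁽ⁿ⁾ − m‖_∞ → 0, then the corresponding multipliers M⁽ⁿ⁾ converge to M in operator norm. -/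
open MeasureTheory Filter

local notation "⟪" x ", " y "⟫" => @inner ℂ _ _ x y

lemma multiplier_aux_norm_bound
    {Ω : Type} [MeasurableSpace Ω] (μ : Measure Ω)
    {H : Type} [NormedAddCommGroup H] [InnerProductSpace ℂ H] [CompleteSpace H]
    (F G : Ω → H) (B_F B_G : ℝ) (hBF : 0 < B_F) (hBG : 0 < B_G)
    (hF_meas : ∀ f : H, Measurable fun ω => ⟪F ω, f⟫)
    (hF_bessel : ∀ f : H,
      ∫⁻ ω, (‖⟪F ω, f⟫‖₊ : ENNReal) ^ 2 ∂μ ≤ ENNReal.ofReal (B_F * ‖f‖ ^ 2))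
    (hG_meas : ∀ f : H, Measurable fun ω => ⟪G ω, f⟫)
    (hG_bessel : ∀ f : H,
      ∫⁻ ω, (‖⟪G ω, f⟫‖₊ : ENNReal) ^ 2 ∂μ ≤ ENNReal.ofReal (B_G * ‖f‖ ^ 2))
    (m₁ m₂ : Ω → ℂ) (h1 : MemLp m₁ ⊤ μ) (h2 : MemLp m₂ ⊤ μ)
    (M₁ M₂ : H →L[ℂ] H)
    (hM₁ : ∀ f g : H, ⟪g, M₁ f⟫ = ∫ ω, m₁ ω * ⟪F ω, f⟫ * ⟪g, G ω⟫ ∂μ)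
    (hM₂ : ∀ f g : H, ⟪g, M₂ f⟫ = ∫ ω, m₂ ω * ⟪F ω, f⟫ * ⟪g, G ω⟫ ∂μ) :
    ‖M₁ - M₂‖ ≤ (eLpNorm (fun ω => m₁ ω - m₂ ω) ⊤ μ).toReal * Real.sqrt (B_F * B_G) := by
  set K' : ENNReal := eLpNorm (fun ω => m₁ ω - m₂ ω) ⊤ μ with hK'def
  have hK'top : K' ≠ ⊤ := (h1.sub h2).eLpNorm_ne_top
  set C : ℝ := K'.toReal * Real.sqrt (B_F * B_G) with hCdef
  have hC : 0 ≤ C := mul_nonneg ENNReal.toReal_nonneg (Real.sqrt_nonneg _)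
  -- L² membership of the coefficient functions
  have memL2 : ∀ (a : Ω → ℂ) (D : ℝ), Measurable a →
      (∫⁻ ω, (‖a ω‖₊ : ENNReal) ^ 2 ∂μ ≤ ENNReal.ofReal D) → MemLp a 2 μ := by
    intro a D ha hbd
    refine ⟨ha.aestronglyMeasurable, ?_⟩
    rw [eLpNorm_eq_lintegral_rpow_enorm_toReal two_ne_zero ENNReal.ofNat_ne_top]
    refine ENNReal.rpow_lt_top_of_nonneg (by norm_num) ?_
    have he : ∀ x : ENNReal, x ^ ((2 : ENNReal).toReal) = x ^ 2 := by
      intro x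
      rw [show ((2 : ENNReal).toReal) = ((2 : ℕ) : ℝ) by norm_num, ENNReal.rpow_natCast]
    refine ne_top_of_le_ne_top (ENNReal.ofReal_ne_top (r := D)) ?_
    calc ∫⁻ ω, (‖a ω‖₊ : ENNReal) ^ ((2 : ENNReal).toReal) ∂μ
        = ∫⁻ ω, (‖a ω‖₊ : ENNReal) ^ 2 ∂μ := by simp_rw [he]
      _ ≤ ENNReal.ofReal D := hbd
  have key : ∀ f g : H, ‖⟪g, (M₁ - M₂) f⟫‖ ≤ C * ‖f‖ * ‖g‖ := by
    intro f g
    set a : Ω → ℂ := fun ω => ⟪F ω, f⟫ with hadef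
    set b : Ω → ℂ := fun ω => ⟪g, G ω⟫ with hbdef
    have haM : Measurable a := hF_meas f
    have hbM : Measurable b := by
      have : b = fun ω => (starRingEnd ℂ) ⟪G ω, g⟫ := by
        funext ω; rw [inner_conj_symm]
      rw [this]
      exact (RCLike.continuous_conj.measurable).comp (hG_meas g)
    have hbnn : ∀ ω, (‖b ω‖₊ : ENNReal) = (‖⟪G ω, g⟫‖₊ : ENNReal) := by
      intro ω
      have : ‖b ω‖ = ‖⟪G ω, g⟫‖ := norm_inner_symm g (G ω)
      simp [nnnorm, this]
    have ha2 : MemLp a 2 μ := memL2 a (B_F * ‖f‖ ^ 2) haM (hF_bessel f)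
    have hb2 : MemLp b 2 μ := by
      refine memL2 b (B_G * ‖g‖ ^ 2) hbM ?_
      calc ∫⁻ ω, (‖b ω‖₊ : ENNReal) ^ 2 ∂μ
          = ∫⁻ ω, (‖⟪G ω, g⟫‖₊ : ENNReal) ^ 2 ∂μ := by
            refine lintegral_congr fun ω => by rw [hbnn]
        _ ≤ ENNReal.ofReal (B_G * ‖g‖ ^ 2) := hG_bessel g
    -- integrability of the integrands
    have hint : ∀ (c : Ω → ℂ), MemLp c ⊤ μ →
        Integrable (fun ω => c ω * a ω * b ω) μ := by
      intro c hc
      have hca : MemLp (c • a) 2 μ := ha2.smul hc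
      have hprod : MemLp ((c • a) • b) 1 μ := by
        refine hb2.smul hca (hpqr := ?_)
        exact ⟨by rw [ENNReal.inv_two_add_inv_two, inv_one]⟩
      exact memLp_one_iff_integrable.mp hprod
    have hint₁ := hint m₁ h1
    have hint₂ := hint m₂ h2
    have hrep : ⟪g, (M₁ - M₂) f⟫ = ∫ ω, (m₁ ω - m₂ ω) * a ω * b ω ∂μ := by
      rw [ContinuousLinearMap.sub_apply, inner_sub_right, hM₁, hM₂,
        ← integral_sub hint₁ hint₂]
      exact integral_congr_ae (Filter.Eventually.of_forall fun ω => by ring)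
    rw [hrep]
    -- lintegral estimate
    have hconj : Real.HolderConjugate 2 2 := Real.HolderConjugate.two_two
    have haem : AEMeasurable (fun ω => (‖a ω‖₊ : ENNReal)) μ :=
      (haM.nnnorm.coe_nnreal_ennreal).aemeasurable
    have hbem : AEMeasurable (fun ω => (‖b ω‖₊ : ENNReal)) μ :=
      (hbM.nnnorm.coe_nnreal_ennreal).aemeasurable
    have he2 : ∀ x : ENNReal, x ^ (2 : ℝ) = x ^ 2 := by
      intro x
      rw [show ((2 : ℝ)) = ((2 : ℕ) : ℝ) by norm_num, ENNReal.rpow_natCast]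
    have hlin : ∫⁻ ω, (‖(m₁ ω - m₂ ω) * a ω * b ω‖₊ : ENNReal) ∂μ ≤
        K' * ((ENNReal.ofReal (B_F * ‖f‖ ^ 2)) ^ (1/2 : ℝ) *
          (ENNReal.ofReal (B_G * ‖g‖ ^ 2)) ^ (1/2 : ℝ)) := by
      calc ∫⁻ ω, (‖(m₁ ω - m₂ ω) * a ω * b ω‖₊ : ENNReal) ∂μ
          = ∫⁻ ω, (‖m₁ ω - m₂ ω‖₊ : ENNReal) * ((‖a ω‖₊ : ENNReal) * ‖b ω‖₊) ∂μ := by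
            refine lintegral_congr fun ω => ?_
            simp [nnnorm_mul, ENNReal.coe_mul, mul_assoc]
        _ ≤ ∫⁻ ω, K' * ((‖a ω‖₊ : ENNReal) * ‖b ω‖₊) ∂μ := by
            refine lintegral_mono_ae ?_
            filter_upwards [enorm_ae_le_eLpNormEssSup (fun ω => m₁ ω - m₂ ω) μ]
              with ω hω
            refine mul_le_mul_left ?_ _
            rwa [hK'def, eLpNorm_exponent_top]
        _ = K' * ∫⁻ ω, (‖a ω‖₊ : ENNReal) * ‖b ω‖₊ ∂μ :=
            lintegral_const_mul' _ _ hK'top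
        _ ≤ K' * ((∫⁻ ω, (‖a ω‖₊ : ENNReal) ^ (2:ℝ) ∂μ) ^ (1/2 : ℝ) *
              (∫⁻ ω, (‖b ω‖₊ : ENNReal) ^ (2:ℝ) ∂μ) ^ (1/2 : ℝ)) := by
            refine mul_le_mul_right ?_ _
            simpa using ENNReal.lintegral_mul_le_Lp_mul_Lq μ hconj haem hbem
        _ ≤ K' * ((ENNReal.ofReal (B_F * ‖f‖ ^ 2)) ^ (1/2 : ℝ) *
              (ENNReal.ofReal (B_G * ‖g‖ ^ 2)) ^ (1/2 : ℝ)) := by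
            refine mul_le_mul_right (mul_le_mul' ?_ ?_) _
            · refine ENNReal.rpow_le_rpow ?_ (by norm_num)
              calc ∫⁻ ω, (‖a ω‖₊ : ENNReal) ^ (2:ℝ) ∂μ
                  = ∫⁻ ω, (‖a ω‖₊ : ENNReal) ^ 2 ∂μ := by simp_rw [he2]
                _ ≤ _ := hF_bessel f
            · refine ENNReal.rpow_le_rpow ?_ (by norm_num)
              calc ∫⁻ ω, (‖b ω‖₊ : ENNReal) ^ (2:ℝ) ∂μ
                  = ∫⁻ ω, (‖⟪G ω, g⟫‖₊ : ENNReal) ^ 2 ∂μ := by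
                    refine lintegral_congr fun ω => by rw [he2, hbnn]
                _ ≤ _ := hG_bessel g
    have hRtop : K' * ((ENNReal.ofReal (B_F * ‖f‖ ^ 2)) ^ (1/2 : ℝ) *
        (ENNReal.ofReal (B_G * ‖g‖ ^ 2)) ^ (1/2 : ℝ)) ≠ ⊤ := by
      refine ENNReal.mul_ne_top hK'top (ENNReal.mul_ne_top ?_ ?_) <;>
        exact (ENNReal.rpow_lt_top_of_nonneg (by norm_num) ENNReal.ofReal_ne_top).ne
    have hnorm_le : ‖∫ ω, (m₁ ω - m₂ ω) * a ω * b ω ∂μ‖ ≤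
        (∫⁻ ω, (‖(m₁ ω - m₂ ω) * a ω * b ω‖₊ : ENNReal) ∂μ).toReal := by
      have h := norm_integral_le_lintegral_norm
        (μ := μ) (f := fun ω => (m₁ ω - m₂ ω) * a ω * b ω)
      have e : ∫⁻ ω, ENNReal.ofReal ‖(m₁ ω - m₂ ω) * a ω * b ω‖ ∂μ =
          ∫⁻ ω, (‖(m₁ ω - m₂ ω) * a ω * b ω‖₊ : ENNReal) ∂μ :=
        lintegral_congr fun ω => ofReal_norm_eq_enorm _
      rw [e] at h
      exact h
    refine hnorm_le.trans ?_
    refine (ENNReal.toReal_mono hRtop hlin).trans ?_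
    -- compute the toReal of the bound
    have htr : (K' * ((ENNReal.ofReal (B_F * ‖f‖ ^ 2)) ^ (1/2 : ℝ) *
        (ENNReal.ofReal (B_G * ‖g‖ ^ 2)) ^ (1/2 : ℝ))).toReal =
        K'.toReal * ((B_F * ‖f‖ ^ 2) ^ (1/2 : ℝ) * (B_G * ‖g‖ ^ 2) ^ (1/2 : ℝ)) := by
      rw [ENNReal.toReal_mul, ENNReal.toReal_mul, ← ENNReal.toReal_rpow,
        ← ENNReal.toReal_rpow, ENNReal.toReal_ofReal (by positivity),
        ENNReal.toReal_ofReal (by positivity)]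
    rw [htr]
    have h1' : (B_F * ‖f‖ ^ 2) ^ (1/2 : ℝ) = Real.sqrt B_F * ‖f‖ := by
      rw [← Real.sqrt_eq_rpow, Real.sqrt_mul hBF.le, Real.sqrt_sq (norm_nonneg f)]
    have h2' : (B_G * ‖g‖ ^ 2) ^ (1/2 : ℝ) = Real.sqrt B_G * ‖g‖ := by
      rw [← Real.sqrt_eq_rpow, Real.sqrt_mul hBG.le, Real.sqrt_sq (norm_nonneg g)]
    rw [h1', h2', hCdef, Real.sqrt_mul hBF.le]
    exact le_of_eq (by ring)
  -- conclude the operator norm bound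
  refine ContinuousLinearMap.opNorm_le_bound _ hC fun f => ?_
  set T : H →L[ℂ] H := M₁ - M₂ with hT
  have hsq : ‖T f‖ ^ 2 ≤ C * ‖f‖ * ‖T f‖ := by
    have h := key f (T f)
    calc ‖T f‖ ^ 2 = ‖⟪T f, T f⟫‖ := by
          rw [inner_self_eq_norm_sq_to_K]
          simp [Complex.norm_real]
      _ ≤ C * ‖f‖ * ‖T f‖ := h
  rcases eq_or_lt_of_le (norm_nonneg (T f)) with h0 | hpos
  · rw [← h0]; positivity
  · nlinarith [hsq, hpos]

/-- Continuous dependence of the multiplier on the symbol: for Bessel mappings `F, G` with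
bounds `B_F, B_G` and symbols `m, m' ∈ L^∞(Ω, μ)` one has
`‖M - M'‖ ≤ ‖m - m'‖_∞ √(B_F B_G)`; consequently if `‖m⁽ⁿ⁾ - m‖_∞ → 0`, then the
corresponding multipliers `M⁽ⁿ⁾` converge to `M` in operator norm.
In Mathlib's convention the paper's `⟨x, y⟩` is `⟪y, x⟫`. -/
theorem multiplier_continuous_in_symbol
    {Ω : Type} [MeasurableSpace Ω] (μ : Measure Ω)
    {H : Type} [NormedAddCommGroup H] [InnerProductSpace ℂ H] [CompleteSpace H]
    (F G : Ω → H) (B_F B_G : ℝ) (hBF : 0 < B_F) (hBG : 0 < B_G)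
    (hF_meas : ∀ f : H, Measurable fun ω => ⟪F ω, f⟫)
    (hF_bessel : ∀ f : H,
      ∫⁻ ω, (‖⟪F ω, f⟫‖₊ : ENNReal) ^ 2 ∂μ ≤ ENNReal.ofReal (B_F * ‖f‖ ^ 2))
    (hG_meas : ∀ f : H, Measurable fun ω => ⟪G ω, f⟫)
    (hG_bessel : ∀ f : H,
      ∫⁻ ω, (‖⟪G ω, f⟫‖₊ : ENNReal) ^ 2 ∂μ ≤ ENNReal.ofReal (B_G * ‖f‖ ^ 2))
    (m m' : Ω → ℂ) (hm : MemLp m ⊤ μ) (hm' : MemLp m' ⊤ μ)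
    (M M' : H →L[ℂ] H)
    (hM : ∀ f g : H, ⟪g, M f⟫ = ∫ ω, m ω * ⟪F ω, f⟫ * ⟪g, G ω⟫ ∂μ)
    (hM' : ∀ f g : H, ⟪g, M' f⟫ = ∫ ω, m' ω * ⟪F ω, f⟫ * ⟪g, G ω⟫ ∂μ) :
    ‖M - M'‖ ≤ (eLpNorm (fun ω => m ω - m' ω) ⊤ μ).toReal * Real.sqrt (B_F * B_G) ∧
    ∀ (mseq : ℕ → Ω → ℂ) (Mseq : ℕ → H →L[ℂ] H),
      (∀ n, MemLp (mseq n) ⊤ μ) →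
      (∀ n, ∀ f g : H,
        ⟪g, Mseq n f⟫ = ∫ ω, mseq n ω * ⟪F ω, f⟫ * ⟪g, G ω⟫ ∂μ) →
      Tendsto (fun n => eLpNorm (fun ω => mseq n ω - m ω) ⊤ μ) atTop (nhds 0) →
      Tendsto Mseq atTop (nhds M) := by
  constructor
  · exact multiplier_aux_norm_bound μ F G B_F B_G hBF hBG hF_meas hF_bessel hG_meas
      hG_bessel m m' hm hm' M M' hM hM'
  · intro mseq Mseq hmem hrep htend
    have hb : ∀ n, ‖Mseq n - M‖ ≤
        (eLpNorm (fun ω => mseq n ω - m ω) ⊤ μ).toReal * Real.sqrt (B_F * B_G) := fun n =>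
      multiplier_aux_norm_bound μ F G B_F B_G hBF hBG hF_meas hF_bessel hG_meas
        hG_bessel (mseq n) m (hmem n) hm (Mseq n) M (hrep n) hM
    have h0 : Tendsto (fun n => (eLpNorm (fun ω => mseq n ω - m ω) ⊤ μ).toReal)
        atTop (nhds 0) := by
      have := (ENNReal.tendsto_toReal (a := 0) (by simp)).comp htend
      exact this
    rw [tendsto_iff_norm_sub_tendsto_zero]
    refine squeeze_zero (fun n => norm_nonneg _) hb ?_
    simpa using h0.mul_const (Real.sqrt (B_F * B_G))
end

section
/- Let m ∈ L²(Ω, μ), let F and G be Bessel mappings for H with respect to (Ω, μ), with Bessel bound B_G for G, and let (F⁽ⁿ⁾) be a sequence of Bessel mappings converging to F uniformly in the strong sense: for every ε > 0 there is N such that ‖F⁽ⁿ⁾(ω) − F(ω)‖ ≤ ε for all n ≥ N and all ω ∈ Ω. Let M⁽ⁿ⁾ and M be bounded operators satisfying ⟨M⁽ⁿ⁾ f, g⟩ = ∫_Ω m(ω)⟨f, F⁽ⁿ⁾(ω)⟩⟨G(ω), g⟩ dμ(ω) and ⟨M f, g⟩ = ∫_Ω m(ω)⟨f, F(ω)⟩⟨G(ω),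 g⟩ dμ(ω) for all f, g ∈ H. Then M⁽ⁿ⁾ converges to M in operator norm; indeed ‖M⁽ⁿ⁾ − M‖ ≤ ε ‖m‖₂ √B_G whenever ‖F⁽ⁿ⁾(ω) − F(ω)‖ ≤ ε for all ω. -/
open MeasureTheory Filter

local notation "⟪" x ", " y "⟫" => @inner ℂ _ _ x y

/-- Continuous dependence of the multiplier on the analysis mapping for `m ∈ L²(Ω, μ)`:
if the Bessel mappings `F⁽ⁿ⁾` converge to `F` uniformly in the strong sense, then the
multipliers `M⁽ⁿ⁾` converge to `M` in operator norm; indeed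
`‖M⁽ⁿ⁾ - M‖ ≤ ε ‖m‖₂ √B_G` whenever `‖F⁽ⁿ⁾(ω) - F(ω)‖ ≤ ε` for all `ω`.
In Mathlib's convention the paper's `⟨x, y⟩` is `⟪y, x⟫`. -/
theorem multiplier_continuous_in_frame_L2_symbol
    {Ω : Type} [MeasurableSpace Ω] (μ : Measure Ω)
    {H : Type} [NormedAddCommGroup H] [InnerProductSpace ℂ H] [CompleteSpace H]
    (m : Ω → ℂ) (hm : MemLp m 2 μ)
    (F G : Ω → H) (B_F B_G : ℝ) (hBF : 0 < B_F) (hBG : 0 < B_G)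
    (hF_meas : ∀ f : H, Measurable fun ω => ⟪F ω, f⟫)
    (hF_bessel : ∀ f : H,
      ∫⁻ ω, (‖⟪F ω, f⟫‖₊ : ENNReal) ^ 2 ∂μ ≤ ENNReal.ofReal (B_F * ‖f‖ ^ 2))
    (hG_meas : ∀ f : H, Measurable fun ω => ⟪G ω, f⟫)
    (hG_bessel : ∀ f : H,
      ∫⁻ ω, (‖⟪G ω, f⟫‖₊ : ENNReal) ^ 2 ∂μ ≤ ENNReal.ofReal (B_G * ‖f‖ ^ 2))
    (Fn : ℕ → Ω → H)
    (hFn_meas : ∀ n, ∀ f : H, Measurable fun ω => ⟪Fn n ω, f⟫)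
    (hFn_bessel : ∀ n, ∃ B : ℝ, 0 < B ∧ ∀ f : H,
      ∫⁻ ω, (‖⟪Fn n ω, f⟫‖₊ : ENNReal) ^ 2 ∂μ ≤ ENNReal.ofReal (B * ‖f‖ ^ 2))
    (hFn_conv : ∀ ε : ℝ, 0 < ε → ∃ N : ℕ, ∀ n ≥ N, ∀ ω, ‖Fn n ω - F ω‖ ≤ ε)
    (Mn : ℕ → H →L[ℂ] H) (M : H →L[ℂ] H)
    (hMn : ∀ n, ∀ f g : H,
      ⟪g, Mn n f⟫ = ∫ ω, m ω * ⟪Fn n ω, f⟫ * ⟪g, G ω⟫ ∂μ)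
    (hM : ∀ f g : H, ⟪g, M f⟫ = ∫ ω, m ω * ⟪F ω, f⟫ * ⟪g, G ω⟫ ∂μ) :
    Tendsto Mn atTop (nhds M) ∧
    ∀ ε : ℝ, 0 < ε → ∀ n, (∀ ω, ‖Fn n ω - F ω‖ ≤ ε) →
      ‖Mn n - M‖ ≤ ε * (eLpNorm m 2 μ).toReal * Real.sqrt B_G := by
  have hK0 : 0 ≤ (eLpNorm m 2 μ).toReal * Real.sqrt B_G :=
    mul_nonneg ENNReal.toReal_nonneg (Real.sqrt_nonneg _)
  have key : ∀ ε : ℝ, 0 < ε → ∀ n, (∀ ω, ‖Fn n ω - F ω‖ ≤ ε) →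
      ‖Mn n - M‖ ≤ ε * (eLpNorm m 2 μ).toReal * Real.sqrt B_G := by
    intro ε hε n hn
    have inner_bound : ∀ f g : H,
        ‖⟪g, Mn n f⟫ - ⟪g, M f⟫‖ ≤
          ε * ‖f‖ * ((eLpNorm m 2 μ).toReal * Real.sqrt B_G) * ‖g‖ := by
      intro f g
      set a : Ω → ℂ := fun ω => m ω * ⟪Fn n ω, f⟫ * ⟪g, G ω⟫ with ha_def
      set b : Ω → ℂ := fun ω => m ω * ⟪F ω, f⟫ * ⟪g, G ω⟫ with hb_def
      set d : Ω → ℂ := fun ω => m ω * ⟪Fn n ω - F ω, f⟫ * ⟪g, G ω⟫ with hd_def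
      have hab : ∀ ω, a ω = b ω + d ω := by
        intro ω
        simp only [ha_def, hb_def, hd_def, inner_sub_left]
        ring
      -- measurability
      have hGg : Measurable fun ω => ⟪g, G ω⟫ := by
        have : (fun ω => ⟪g, G ω⟫) = fun ω => starRingEnd ℂ ⟪G ω, g⟫ := by
          funext ω; rw [inner_conj_symm]
        rw [this]
        exact continuous_star.measurable.comp (hG_meas g)
      have hdF : Measurable fun ω => ⟪Fn n ω - F ω, f⟫ := by
        have : (fun ω => ⟪Fn n ω - F ω, f⟫) = fun ω => ⟪Fn n ω, f⟫ - ⟪F ω, f⟫ := by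
          funext ω; rw [inner_sub_left]
        rw [this]
        exact (hFn_meas n f).sub (hF_meas f)
      have hd_meas : AEStronglyMeasurable d μ :=
        (hm.1.mul hdF.aestronglyMeasurable).mul hGg.aestronglyMeasurable
      -- pointwise bound on d
      have hpt : ∀ ω, (‖d ω‖₊ : ENNReal) ≤
          ENNReal.ofReal (ε * ‖f‖) * ((‖m ω‖₊ : ENNReal) * (‖⟪g, G ω⟫‖₊ : ENNReal)) := by
        intro ω
        have h1 : ‖⟪Fn n ω - F ω, f⟫‖ ≤ ε * ‖f‖ :=
          (norm_inner_le_norm _ _).trans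
            (mul_le_mul_of_nonneg_right (hn ω) (norm_nonneg f))
        have h2 : ‖d ω‖ ≤ ε * ‖f‖ * (‖m ω‖ * ‖⟪g, G ω⟫‖) := by
          have : ‖d ω‖ = ‖m ω‖ * ‖⟪Fn n ω - F ω, f⟫‖ * ‖⟪g, G ω⟫‖ := by
            simp [hd_def, norm_mul]
          rw [this]
          calc ‖m ω‖ * ‖⟪Fn n ω - F ω, f⟫‖ * ‖⟪g, G ω⟫‖
              ≤ ‖m ω‖ * (ε * ‖f‖) * ‖⟪g, G ω⟫‖ := by
                gcongr
            _ = ε * ‖f‖ * (‖m ω‖ * ‖⟪g, G ω⟫‖) := by ring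
        calc (‖d ω‖₊ : ENNReal) = ENNReal.ofReal ‖d ω‖ :=
              (ofReal_norm _).symm
          _ ≤ ENNReal.ofReal (ε * ‖f‖ * (‖m ω‖ * ‖⟪g, G ω⟫‖)) :=
              ENNReal.ofReal_le_ofReal h2
          _ = ENNReal.ofReal (ε * ‖f‖) * ((‖m ω‖₊ : ENNReal) * (‖⟪g, G ω⟫‖₊ : ENNReal)) := by
              rw [ENNReal.ofReal_mul (by positivity), ENNReal.ofReal_mul (norm_nonneg _),
                ofReal_norm, ofReal_norm, enorm_eq_nnnorm, enorm_eq_nnnorm]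
      -- Hölder bound
      have hHolder : ∫⁻ ω, (‖m ω‖₊ : ENNReal) * (‖⟪g, G ω⟫‖₊ : ENNReal) ∂μ ≤
          eLpNorm m 2 μ * ENNReal.ofReal (Real.sqrt B_G * ‖g‖) := by
        have hconj : Real.HolderConjugate 2 2 := by constructor <;> norm_num
        have hH := ENNReal.lintegral_mul_le_Lp_mul_Lq μ hconj
          (f := fun ω => (‖m ω‖₊ : ENNReal)) (g := fun ω => (‖⟪g, G ω⟫‖₊ : ENNReal))
          hm.1.enorm hGg.enorm.aemeasurable
        have hH' : ∫⁻ ω, (‖m ω‖₊ : ENNReal) * (‖⟪g, G ω⟫‖₊ : ENNReal) ∂μ ≤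
            (∫⁻ ω, (‖m ω‖₊ : ENNReal) ^ (2 : ℝ) ∂μ) ^ ((1 : ℝ)/2) *
            (∫⁻ ω, (‖⟪g, G ω⟫‖₊ : ENNReal) ^ (2 : ℝ) ∂μ) ^ ((1 : ℝ)/2) := by
          simpa using hH
        refine hH'.trans ?_
        have e1 : (∫⁻ ω, (‖m ω‖₊ : ENNReal) ^ (2 : ℝ) ∂μ) ^ ((1 : ℝ)/2) = eLpNorm m 2 μ := by
          rw [eLpNorm_eq_lintegral_rpow_enorm_toReal (by norm_num) (by norm_num)]
          norm_num
          rfl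
        have e2 : (∫⁻ ω, (‖⟪g, G ω⟫‖₊ : ENNReal) ^ (2 : ℝ) ∂μ) ^ ((1 : ℝ)/2) ≤
            ENNReal.ofReal (Real.sqrt B_G * ‖g‖) := by
          have hGnorm : ∀ ω, (‖⟪g, G ω⟫‖₊ : ENNReal) = (‖⟪G ω, g⟫‖₊ : ENNReal) := by
            intro ω
            congr 1
            rw [← inner_conj_symm]
            exact nnnorm_star _
          have hle : ∫⁻ ω, (‖⟪g, G ω⟫‖₊ : ENNReal) ^ (2 : ℝ) ∂μ ≤
              ENNReal.ofReal (B_G * ‖g‖ ^ 2) := by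
            calc ∫⁻ ω, (‖⟪g, G ω⟫‖₊ : ENNReal) ^ (2 : ℝ) ∂μ
                = ∫⁻ ω, (‖⟪G ω, g⟫‖₊ : ENNReal) ^ 2 ∂μ := by
                  refine lintegral_congr fun ω => ?_
                  rw [hGnorm ω, ← ENNReal.rpow_natCast]
                  norm_num
              _ ≤ ENNReal.ofReal (B_G * ‖g‖ ^ 2) := hG_bessel g
          calc (∫⁻ ω, (‖⟪g, G ω⟫‖₊ : ENNReal) ^ (2 : ℝ) ∂μ) ^ ((1 : ℝ)/2)
              ≤ (ENNReal.ofReal (B_G * ‖g‖ ^ 2)) ^ ((1 : ℝ)/2) :=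
                ENNReal.rpow_le_rpow hle (by norm_num)
            _ = ENNReal.ofReal (Real.sqrt B_G * ‖g‖) := by
                rw [ENNReal.ofReal_rpow_of_nonneg (by positivity) (by norm_num)]
                congr 1
                rw [← Real.sqrt_eq_rpow, Real.sqrt_mul hBG.le, Real.sqrt_sq (norm_nonneg g)]
        rw [e1]
        exact mul_le_mul_right e2 _
      have hd_lint : ∫⁻ ω, (‖d ω‖₊ : ENNReal) ∂μ ≤
          ENNReal.ofReal (ε * ‖f‖) * (eLpNorm m 2 μ * ENNReal.ofReal (Real.sqrt B_G * ‖g‖)) := by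
        calc ∫⁻ ω, (‖d ω‖₊ : ENNReal) ∂μ
            ≤ ∫⁻ ω, ENNReal.ofReal (ε * ‖f‖) *
                ((‖m ω‖₊ : ENNReal) * (‖⟪g, G ω⟫‖₊ : ENNReal)) ∂μ := lintegral_mono hpt
          _ = ENNReal.ofReal (ε * ‖f‖) *
                ∫⁻ ω, (‖m ω‖₊ : ENNReal) * (‖⟪g, G ω⟫‖₊ : ENNReal) ∂μ :=
              lintegral_const_mul' _ _ ENNReal.ofReal_ne_top
          _ ≤ _ := mul_le_mul_right hHolder _
      have hbound_ne_top : ENNReal.ofReal (ε * ‖f‖) *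
          (eLpNorm m 2 μ * ENNReal.ofReal (Real.sqrt B_G * ‖g‖)) ≠ ⊤ :=
        ENNReal.mul_ne_top ENNReal.ofReal_ne_top
          (ENNReal.mul_ne_top hm.2.ne ENNReal.ofReal_ne_top)
      have hd_int : Integrable d μ := by
        refine ⟨hd_meas, ?_⟩
        exact lt_of_le_of_lt hd_lint (lt_top_iff_ne_top.mpr hbound_ne_top)
      have hnorm_d : ∫ ω, ‖d ω‖ ∂μ ≤
          ε * ‖f‖ * ((eLpNorm m 2 μ).toReal * (Real.sqrt B_G * ‖g‖)) := by
        rw [integral_norm_eq_lintegral_enorm hd_meas]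
        have hle2 := ENNReal.toReal_mono hbound_ne_top hd_lint
        refine hle2.trans (le_of_eq ?_)
        rw [ENNReal.toReal_mul, ENNReal.toReal_mul,
          ENNReal.toReal_ofReal (by positivity), ENNReal.toReal_ofReal (by positivity)]
      have final : ‖⟪g, Mn n f⟫ - ⟪g, M f⟫‖ ≤
          ε * ‖f‖ * ((eLpNorm m 2 μ).toReal * (Real.sqrt B_G * ‖g‖)) := by
        rw [hMn n f g, hM f g]
        by_cases hb : Integrable b μ
        · have ha : Integrable a μ := by
            have : a = fun ω => b ω + d ω := funext hab
            rw [this]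
            exact hb.add hd_int
          have : (∫ ω, a ω ∂μ) - ∫ ω, b ω ∂μ = ∫ ω, d ω ∂μ := by
            rw [← integral_sub ha hb]
            refine integral_congr_ae (Filter.Eventually.of_forall fun ω => ?_)
            show a ω - b ω = d ω
            rw [hab ω]; ring
          rw [this]
          exact (norm_integral_le_integral_norm _).trans hnorm_d
        · have ha : ¬ Integrable a μ := by
            intro h
            apply hb
            have : b = fun ω => a ω - d ω := by
              funext ω; rw [hab ω]; ring
            rw [this]
            exact h.sub hd_int
          rw [integral_undef ha, integral_undef hb]
          simp only [sub_zero, norm_zero]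
          positivity
      have hre : ε * ‖f‖ * ((eLpNorm m 2 μ).toReal * (Real.sqrt B_G * ‖g‖)) =
          ε * ‖f‖ * ((eLpNorm m 2 μ).toReal * Real.sqrt B_G) * ‖g‖ := by ring
      rw [← hre]
      exact final
    refine ContinuousLinearMap.opNorm_le_bound _ (by positivity) fun f => ?_
    set v : H := Mn n f - M f with hv_def
    have happ : (Mn n - M) f = v := by simp [hv_def]
    rw [happ]
    have hinner : ⟪v, Mn n f⟫ - ⟪v, M f⟫ = ⟪v, v⟫ := by
      rw [← inner_sub_right]
    have hsq : ‖v‖ ^ 2 ≤ ε * ‖f‖ * ((eLpNorm m 2 μ).toReal * Real.sqrt B_G) * ‖v‖ := by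
      have h1 := inner_bound f v
      rw [hinner] at h1
      rw [inner_self_eq_norm_sq_to_K] at h1
      simpa using h1
    rcases eq_or_lt_of_le (norm_nonneg v) with h | h
    · rw [← h]
      positivity
    · have hmul : ‖v‖ * ‖v‖ ≤ ε * ‖f‖ * ((eLpNorm m 2 μ).toReal * Real.sqrt B_G) * ‖v‖ := by
        rw [← pow_two]; exact hsq
      calc ‖v‖ ≤ ε * ‖f‖ * ((eLpNorm m 2 μ).toReal * Real.sqrt B_G) :=
            le_of_mul_le_mul_right hmul h
        _ = ε * (eLpNorm m 2 μ).toReal * Real.sqrt B_G * ‖f‖ := by ring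
  refine ⟨?_, fun ε hε n h => key ε hε n h⟩
  rw [Metric.tendsto_atTop]
  intro ε hε
  set K := (eLpNorm m 2 μ).toReal * Real.sqrt B_G with hK_def
  have hK1 : (0:ℝ) < K + 1 := by linarith
  set δ := ε / (2 * (K + 1)) with hδ_def
  have hδpos : 0 < δ := by positivity
  obtain ⟨N, hN⟩ := hFn_conv δ hδpos
  refine ⟨N, fun n hn => ?_⟩
  rw [dist_eq_norm]
  have hkey := key δ hδpos n (hN n hn)
  have hδK : δ * K < ε := by
    have h1 : δ * (K + 1) = ε / 2 := by
      rw [hδ_def]; field_simp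
    nlinarith
  calc ‖Mn n - M‖ ≤ δ * (eLpNorm m 2 μ).toReal * Real.sqrt B_G := hkey
    _ = δ * K := by rw [hK_def]; ring
    _ < ε := hδK
end

section
/- Let m ∈ L¹(Ω, μ), let F and G be Bessel mappings for H with respect to (Ω, μ) with G norm bounded by L_G, and let (F⁽ⁿ⁾) be a sequence of Bessel mappings converging to F uniformly in the strong sense: for every ε > 0 there is N such that ‖F⁽ⁿ⁾(ω) − F(ω)‖ ≤ ε for all n ≥ N and all ω ∈ Ω. Let M⁽ⁿ⁾ and M be bounded operators satisfying ⟨M⁽ⁿ⁾ f, g⟩ = ∫_Ω m(ω)⟨f, F⁽ⁿ⁾(ω)⟩⟨G(ω), g⟩ dμ(ω) and ⟨M f, g⟩ = ∫_Ω m(ω)⟨f, F(ω)⟩⟨G(ω), g⟩ dμ(ω) for all f, g ∈ H. Then M⁽ⁿ⁾ converges to M in operator norm; indeed ‖M⁽ⁿ⁾ − M‖ ≤ ε ‖m‖₁ L_G whenever ‖F⁽ⁿ⁾(ω) − F(ω)‖ ≤ ε for all ω. -/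
open MeasureTheory Filter

local notation "⟪" x ", " y "⟫" => @inner ℂ _ _ x y

/-- Continuous dependence of the multiplier on the analysis mapping for `m ∈ L¹(Ω, μ)` and
norm-bounded `G`: if the Bessel mappings `F⁽ⁿ⁾` converge to `F` uniformly in the strong
sense, then the multipliers `M⁽ⁿ⁾` converge to `M` in operator norm; indeed
`‖M⁽ⁿ⁾ - M‖ ≤ ε ‖m‖₁ L_G` whenever `‖F⁽ⁿ⁾(ω) - F(ω)‖ ≤ ε` for all `ω`.
In Mathlib's convention the paper's `⟨x, y⟩` is `⟪y, x⟫`. -/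
theorem multiplier_continuous_in_frame_L1_symbol
    {Ω : Type} [MeasurableSpace Ω] (μ : Measure Ω)
    {H : Type} [NormedAddCommGroup H] [InnerProductSpace ℂ H] [CompleteSpace H]
    (m : Ω → ℂ) (hm : Integrable m μ)
    (F G : Ω → H) (B_F B_G : ℝ) (hBF : 0 < B_F) (hBG : 0 < B_G)
    (hF_meas : ∀ f : H, Measurable fun ω => ⟪F ω, f⟫)
    (hF_bessel : ∀ f : H,
      ∫⁻ ω, (‖⟪F ω, f⟫‖₊ : ENNReal) ^ 2 ∂μ ≤ ENNReal.ofReal (B_F * ‖f‖ ^ 2))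
    (hG_meas : ∀ f : H, Measurable fun ω => ⟪G ω, f⟫)
    (hG_bessel : ∀ f : H,
      ∫⁻ ω, (‖⟪G ω, f⟫‖₊ : ENNReal) ^ 2 ∂μ ≤ ENNReal.ofReal (B_G * ‖f‖ ^ 2))
    (L_G : ℝ) (hG_bdd : ∀ᵐ ω ∂μ, ‖G ω‖ ≤ L_G)
    (Fn : ℕ → Ω → H)
    (hFn_meas : ∀ n, ∀ f : H, Measurable fun ω => ⟪Fn n ω, f⟫)
    (hFn_bessel : ∀ n, ∃ B : ℝ, 0 < B ∧ ∀ f : H,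
      ∫⁻ ω, (‖⟪Fn n ω, f⟫‖₊ : ENNReal) ^ 2 ∂μ ≤ ENNReal.ofReal (B * ‖f‖ ^ 2))
    (hFn_conv : ∀ ε : ℝ, 0 < ε → ∃ N : ℕ, ∀ n ≥ N, ∀ ω, ‖Fn n ω - F ω‖ ≤ ε)
    (Mn : ℕ → H →L[ℂ] H) (M : H →L[ℂ] H)
    (hMn : ∀ n, ∀ f g : H,
      ⟪g, Mn n f⟫ = ∫ ω, m ω * ⟪Fn n ω, f⟫ * ⟪g, G ω⟫ ∂μ)
    (hM : ∀ f g : H, ⟪g, M f⟫ = ∫ ω, m ω * ⟪F ω, f⟫ * ⟪g, G ω⟫ ∂μ) :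
    Tendsto Mn atTop (nhds M) ∧
    ∀ ε : ℝ, 0 < ε → ∀ n, (∀ ω, ‖Fn n ω - F ω‖ ≤ ε) →
      ‖Mn n - M‖ ≤ ε * (∫ ω, ‖m ω‖ ∂μ) * L_G := by
  classical
  by_cases hL : 0 ≤ L_G
  · -- main case
    set I : ℝ := ∫ ω, ‖m ω‖ ∂μ with hIdef
    have hI0 : 0 ≤ I := integral_nonneg fun ω => norm_nonneg _
    have hGg_meas : ∀ g : H, Measurable fun ω => ⟪g, G ω⟫ := by
      intro g
      have : (fun ω => ⟪g, G ω⟫) = fun ω => (starRingEnd ℂ) ⟪G ω, g⟫ := by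
        funext ω; rw [inner_conj_symm]
      rw [this]
      exact Complex.continuous_conj.measurable.comp (hG_meas g)
    have key : ∀ ε : ℝ, 0 ≤ ε → ∀ n, (∀ ω, ‖Fn n ω - F ω‖ ≤ ε) →
        ‖Mn n - M‖ ≤ ε * I * L_G := by
      intro ε hε n hεn
      have hC : 0 ≤ ε * I * L_G := mul_nonneg (mul_nonneg hε hI0) hL
      have inner_bound : ∀ f g : H,
          ‖⟪g, (Mn n - M) f⟫‖ ≤ ε * I * L_G * (‖f‖ * ‖g‖) := by
        intro f g
        have hCfg : 0 ≤ ε * I * L_G * (‖f‖ * ‖g‖) :=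
          mul_nonneg hC (mul_nonneg (norm_nonneg _) (norm_nonneg _))
        have hbound : ∀ᵐ ω ∂μ,
            ‖m ω * (⟪Fn n ω, f⟫ - ⟪F ω, f⟫) * ⟪g, G ω⟫‖ ≤
              ‖m ω‖ * (ε * ‖f‖ * (L_G * ‖g‖)) := by
          filter_upwards [hG_bdd] with ω hω
          have hd : ‖⟪Fn n ω, f⟫ - ⟪F ω, f⟫‖ ≤ ε * ‖f‖ := by
            rw [← inner_sub_left]
            calc ‖⟪Fn n ω - F ω, f⟫‖ ≤ ‖Fn n ω - F ω‖ * ‖f‖ := norm_inner_le_norm _ _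
              _ ≤ ε * ‖f‖ := by
                  exact mul_le_mul_of_nonneg_right (hεn ω) (norm_nonneg f)
          have hc : ‖⟪g, G ω⟫‖ ≤ L_G * ‖g‖ := by
            calc ‖⟪g, G ω⟫‖ ≤ ‖g‖ * ‖G ω‖ := norm_inner_le_norm _ _
              _ ≤ ‖g‖ * L_G := mul_le_mul_of_nonneg_left hω (norm_nonneg g)
              _ = L_G * ‖g‖ := mul_comm _ _
          calc ‖m ω * (⟪Fn n ω, f⟫ - ⟪F ω, f⟫) * ⟪g, G ω⟫‖
              = ‖m ω‖ * (‖⟪Fn n ω, f⟫ - ⟪F ω, f⟫‖ * ‖⟪g, G ω⟫‖) := by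
                rw [norm_mul, norm_mul, mul_assoc]
            _ ≤ ‖m ω‖ * (ε * ‖f‖ * (L_G * ‖g‖)) := by
                refine mul_le_mul_of_nonneg_left ?_ (norm_nonneg _)
                exact mul_le_mul hd hc (norm_nonneg _)
                  (mul_nonneg hε (norm_nonneg f))
        have hD_int : Integrable
            (fun ω => m ω * (⟪Fn n ω, f⟫ - ⟪F ω, f⟫) * ⟪g, G ω⟫) μ := by
          refine Integrable.mono' (hm.norm.mul_const (ε * ‖f‖ * (L_G * ‖g‖))) ?_ hbound
          exact ((hm.1.mul
            (((hFn_meas n f).sub (hF_meas f)).aestronglyMeasurable)).mul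
            (hGg_meas g).aestronglyMeasurable)
        have hsplit : ⟪g, (Mn n - M) f⟫ = ⟪g, Mn n f⟫ - ⟪g, M f⟫ := by
          simp [inner_sub_right]
        by_cases hA : Integrable (fun ω => m ω * ⟪Fn n ω, f⟫ * ⟪g, G ω⟫) μ
        · have hB : Integrable (fun ω => m ω * ⟪F ω, f⟫ * ⟪g, G ω⟫) μ := by
            have h2 := hA.sub hD_int
            exact h2.congr (Filter.Eventually.of_forall fun ω => by
              simp only [Pi.sub_apply]; ring)
          have heq : ⟪g, (Mn n - M) f⟫ =
              ∫ ω, m ω * (⟪Fn n ω, f⟫ - ⟪F ω, f⟫) * ⟪g, G ω⟫ ∂μ := by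
            rw [hsplit, hMn, hM, ← integral_sub hA hB]
            congr 1; funext ω; ring
          rw [heq]
          calc ‖∫ ω, m ω * (⟪Fn n ω, f⟫ - ⟪F ω, f⟫) * ⟪g, G ω⟫ ∂μ‖
              ≤ ∫ ω, ‖m ω‖ * (ε * ‖f‖ * (L_G * ‖g‖)) ∂μ :=
                norm_integral_le_of_norm_le (hm.norm.mul_const _) hbound
            _ = I * (ε * ‖f‖ * (L_G * ‖g‖)) := integral_mul_const _ _
            _ = ε * I * L_G * (‖f‖ * ‖g‖) := by ring
        · have hB : ¬ Integrable (fun ω => m ω * ⟪F ω, f⟫ * ⟪g, G ω⟫) μ := by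
            intro hB
            apply hA
            have h2 := hB.add hD_int
            exact h2.congr (Filter.Eventually.of_forall fun ω => by
              simp only [Pi.add_apply]; ring)
          rw [hsplit, hMn, hM, integral_undef hA, integral_undef hB]
          simpa using hCfg
      refine ContinuousLinearMap.opNorm_le_bound _ (mul_nonneg (mul_nonneg hε hI0) hL)
        fun f => ?_
      rcases eq_or_ne ((Mn n - M) f) 0 with h0 | h0
      · rw [h0, norm_zero]
        exact mul_nonneg hC (norm_nonneg f)
      · have h1 := inner_bound f ((Mn n - M) f)
        have h2 : ‖⟪(Mn n - M) f, (Mn n - M) f⟫‖ = ‖(Mn n - M) f‖ ^ 2 := by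
          rw [inner_self_eq_norm_sq_to_K]; simp
        rw [h2] at h1
        have hpos : 0 < ‖(Mn n - M) f‖ := norm_pos_iff.mpr h0
        nlinarith [h1, hpos]
    constructor
    · rw [Metric.tendsto_atTop]
      intro ε hε
      have hD : 0 < I * L_G + 1 := by nlinarith [mul_nonneg hI0 hL]
      obtain ⟨N, hN⟩ := hFn_conv (ε / (I * L_G + 1)) (div_pos hε hD)
      refine ⟨N, fun n hn => ?_⟩
      have h1 := key _ (div_pos hε hD).le n (hN n hn)
      rw [dist_eq_norm]
      calc ‖Mn n - M‖ ≤ ε / (I * L_G + 1) * I * L_G := h1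
        _ = ε / (I * L_G + 1) * (I * L_G) := by ring
        _ < ε / (I * L_G + 1) * (I * L_G + 1) := by
            exact mul_lt_mul_of_pos_left (by linarith) (div_pos hε hD)
        _ = ε := div_mul_cancel₀ ε hD.ne'
    · intro ε hε n hn
      exact key ε hε.le n hn
  · -- degenerate: L_G < 0 forces μ = 0
    have hμ : μ = 0 := by
      by_contra hμ
      haveI : (ae μ).NeBot := ae_neBot.mpr hμ
      obtain ⟨ω, hω⟩ := hG_bdd.exists
      have := norm_nonneg (G ω)
      linarith [not_le.mp hL]
    subst hμ
    have hMnM : ∀ n, Mn n = M := by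
      intro n
      ext f
      rw [← sub_eq_zero, ← inner_self_eq_zero (𝕜 := ℂ)]
      rw [inner_sub_right, hMn, hM]
      simp
    constructor
    · have : Mn = fun _ => M := funext hMnM
      rw [this]
      exact tendsto_const_nhds
    · intro ε hε n hn
      rw [hMnM n, sub_self, norm_zero]
      simp
end

section
/- Let C : H → H be a bounded linear operator with bounded inverse (C ∈ GL(H)) and let F : Ω → H be a C-controlled continuous frame, i.e., F is weakly measurable, for all f ∈ H the function ω ↦ ⟨f, F(ω)⟩⟨C F(ω), f⟩ is integrable, and there exist constants 0 < m_CL ≤ M_CL < ∞ such that m_CL ‖f‖² ≤ ∫_Ω ⟨f, F(ω)⟩⟨C F(ω), f⟩ dμ(ω) ≤ M_CL ‖f‖² for all f ∈ H. Then F is a continuous frame for H with respect to (Ω, μ). -/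
open MeasureTheory
open scoped ComplexOrder

local notation "⟪" x ", " y "⟫" => @inner ℂ _ _ x y

private lemma polar_aux (a b c d : ℂ) :
    a * d = 4⁻¹ * ((a+b)*(c+d) - (a-b)*(c-d)
      + Complex.I*((a+Complex.I*b)*(c-Complex.I*d))
      - Complex.I*((a-Complex.I*b)*(c+Complex.I*d))) := by
  have h : (Complex.I:ℂ) * Complex.I = -1 := Complex.I_mul_I
  linear_combination ((a*d - b*c)/2) * h

set_option maxHeartbeats 1600000 in
/-- Every `C`-controlled continuous frame (for `C ∈ GL(H)`) is a continuous frame.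
The controlled frame condition `m_CL ‖f‖² ≤ ∫ ⟨f, F(ω)⟩⟨C F(ω), f⟩ dμ ≤ M_CL ‖f‖²` is
expressed with the complex order (so in particular the integral is real); in Mathlib's
convention the paper's `⟨x, y⟩` is `⟪y, x⟫`. -/
theorem controlled_continuous_frame_is_frame
    {Ω : Type} [MeasurableSpace Ω] (μ : Measure Ω)
    {H : Type} [NormedAddCommGroup H] [InnerProductSpace ℂ H] [CompleteSpace H]
    (C : H ≃L[ℂ] H) (F : Ω → H)
    (hF_meas : ∀ f : H, Measurable fun ω => ⟪F ω, f⟫)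
    (h_int : ∀ f : H, Integrable (fun ω => ⟪F ω, f⟫ * ⟪f, C (F ω)⟫) μ)
    (m_CL M_CL : ℝ) (h_mCL : 0 < m_CL) (h_le : m_CL ≤ M_CL)
    (h_lower : ∀ f : H,
      (m_CL * ‖f‖ ^ 2 : ℂ) ≤ ∫ ω, ⟪F ω, f⟫ * ⟪f, C (F ω)⟫ ∂μ)
    (h_upper : ∀ f : H,
      ∫ ω, ⟪F ω, f⟫ * ⟪f, C (F ω)⟫ ∂μ ≤ (M_CL * ‖f‖ ^ 2 : ℂ)) :
    ∃ A B : ℝ, 0 < A ∧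
      (∀ f : H,
        ENNReal.ofReal (A * ‖f‖ ^ 2) ≤ ∫⁻ ω, (‖⟪F ω, f⟫‖₊ : ENNReal) ^ 2 ∂μ) ∧
      (∀ f : H,
        ∫⁻ ω, (‖⟪F ω, f⟫‖₊ : ENNReal) ^ 2 ∂μ ≤ ENNReal.ofReal (B * ‖f‖ ^ 2)) := by
  set Cop : H →L[ℂ] H := (C : H →L[ℂ] H) with hCop
  set D : H →L[ℂ] H := ContinuousLinearMap.adjoint Cop with hD
  set D' : H →L[ℂ] H := ContinuousLinearMap.adjoint (C.symm : H →L[ℂ] H) with hD'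
  set Q : H → ℂ := fun f => ∫ ω, ⟪F ω, f⟫ * ⟪f, C (F ω)⟫ ∂μ with hQdef
  have hM : 0 < M_CL := lt_of_lt_of_le h_mCL h_le
  -- Q f is real with bounds
  have hQre : ∀ f : H, m_CL * ‖f‖^2 ≤ (Q f).re ∧ (Q f).re ≤ M_CL * ‖f‖^2 ∧ (Q f).im = 0 := by
    intro f
    have h1 := h_lower f
    have h2 := h_upper f
    rw [show (↑m_CL * ↑‖f‖ ^ 2 : ℂ) = ((m_CL * ‖f‖^2 : ℝ) : ℂ) by push_cast; ring] at h1
    rw [show (↑M_CL * ↑‖f‖ ^ 2 : ℂ) = ((M_CL * ‖f‖^2 : ℝ) : ℂ) by push_cast; ring] at h2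
    rw [Complex.le_def] at h1 h2
    refine ⟨?_, ?_, ?_⟩
    · have := h1.1; rwa [Complex.ofReal_re] at this
    · have := h2.1; rwa [Complex.ofReal_re] at this
    · have := h1.2; rw [Complex.ofReal_im] at this; exact this.symm
  have hQnorm : ∀ f : H, ‖Q f‖ ≤ M_CL * ‖f‖^2 := by
    intro f
    obtain ⟨hl, hu, him⟩ := hQre f
    have hnn : 0 ≤ (Q f).re := le_trans (by positivity) hl
    have hre : Q f = (((Q f).re : ℝ) : ℂ) := by
      apply Complex.ext <;> simp [him]
    rw [hre, Complex.norm_real, Real.norm_eq_abs, abs_of_nonneg hnn]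
    exact hu
  -- the adjoint trick
  have hDD' : ∀ x : H, D (D' x) = x := by
    intro x
    have hcomp : (C.symm : H →L[ℂ] H).comp Cop = ContinuousLinearMap.id ℂ H := by
      ext y; simp [hCop]
    have : D.comp D' = ContinuousLinearMap.id ℂ H := by
      rw [hD, hD', ← ContinuousLinearMap.adjoint_comp, hcomp, ContinuousLinearMap.adjoint_id]
    calc D (D' x) = (D.comp D') x := rfl
      _ = x := by rw [this]; rfl
  have hD'inner : ∀ (f : H) (x : H), ⟪D' f, C x⟫ = ⟪f, x⟫ := by
    intro f x
    have := ContinuousLinearMap.adjoint_inner_left Cop x (D' f)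
    rw [← hD] at this
    rw [show (C x : H) = Cop x from rfl, ← this, hDD']
  have hDinner : ∀ (f : H) (x : H), ⟪f, C x⟫ = ⟪D f, x⟫ := by
    intro f x
    exact (ContinuousLinearMap.adjoint_inner_left Cop x f).symm
  -- pointwise polarization of the integrand
  have hPoint : ∀ (f g : H) (ω : Ω),
      ⟪F ω, f⟫ * ⟪g, C (F ω)⟫ =
        4⁻¹ * ((⟪F ω, f+g⟫ * ⟪f+g, C (F ω)⟫) - (⟪F ω, f-g⟫ * ⟪f-g, C (F ω)⟫)
          + Complex.I * (⟪F ω, f + Complex.I • g⟫ * ⟪f + Complex.I • g, C (F ω)⟫)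
          - Complex.I * (⟪F ω, f - Complex.I • g⟫ * ⟪f - Complex.I • g, C (F ω)⟫)) := by
    intro f g ω
    have := polar_aux ⟪F ω, f⟫ ⟪F ω, g⟫ ⟪f, C (F ω)⟫ ⟪g, C (F ω)⟫
    rw [this]
    congr 1
    simp only [inner_add_right, inner_add_left, inner_sub_right, inner_sub_left,
      inner_smul_right, inner_smul_left, Complex.conj_I]
    ring
  -- integrability for pairs
  have hIntPair : ∀ f g : H, Integrable (fun ω => ⟪F ω, f⟫ * ⟪g, C (F ω)⟫) μ := by
    intro f g
    have : (fun ω => ⟪F ω, f⟫ * ⟪g, C (F ω)⟫) =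
        (fun ω =>
        4⁻¹ * ((⟪F ω, f+g⟫ * ⟪f+g, C (F ω)⟫) - (⟪F ω, f-g⟫ * ⟪f-g, C (F ω)⟫)
          + Complex.I * (⟪F ω, f + Complex.I • g⟫ * ⟪f + Complex.I • g, C (F ω)⟫)
          - Complex.I * (⟪F ω, f - Complex.I • g⟫ * ⟪f - Complex.I • g, C (F ω)⟫))) := by
      funext ω; exact hPoint f g ω
    rw [this]
    exact ((((h_int (f+g)).sub (h_int (f-g))).add
      ((h_int (f + Complex.I • g)).const_mul Complex.I)).sub
      ((h_int (f - Complex.I • g)).const_mul Complex.I)).const_mul (4⁻¹ : ℂ)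
  -- the sesquilinear integral in terms of Q
  have hBform : ∀ f g : H, ∫ ω, ⟪F ω, f⟫ * ⟪g, C (F ω)⟫ ∂μ =
      4⁻¹ * (Q (f+g) - Q (f-g) + Complex.I * Q (f + Complex.I • g)
        - Complex.I * Q (f - Complex.I • g)) := by
    intro f g
    have i0 := h_int (f+g)
    have i2 := h_int (f-g)
    have i1 : Integrable (fun ω =>
        Complex.I * (⟪F ω, f + Complex.I • g⟫ * ⟪f + Complex.I • g, C (F ω)⟫)) μ :=
      (h_int (f + Complex.I • g)).const_mul Complex.I
    have i3 : Integrable (fun ω =>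
        Complex.I * (⟪F ω, f - Complex.I • g⟫ * ⟪f - Complex.I • g, C (F ω)⟫)) μ :=
      (h_int (f - Complex.I • g)).const_mul Complex.I
    have j02 : Integrable (fun ω =>
        ⟪F ω, f+g⟫ * ⟪f+g, C (F ω)⟫ - ⟪F ω, f-g⟫ * ⟪f-g, C (F ω)⟫) μ := i0.sub i2
    have j021 : Integrable (fun ω =>
        ⟪F ω, f+g⟫ * ⟪f+g, C (F ω)⟫ - ⟪F ω, f-g⟫ * ⟪f-g, C (F ω)⟫
          + Complex.I * (⟪F ω, f + Complex.I • g⟫ * ⟪f + Complex.I • g, C (F ω)⟫)) μ :=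
      j02.add i1
    simp only [hQdef]
    rw [integral_congr_ae (Filter.Eventually.of_forall (hPoint f g)), integral_const_mul _ _,
      integral_sub j021 i3, integral_add j02 i1,
      integral_sub i0 i2, integral_const_mul _ _, integral_const_mul _ _]
  -- norm bound for the form
  have hBnorm : ∀ f g : H, ‖∫ ω, ⟪F ω, f⟫ * ⟪g, C (F ω)⟫ ∂μ‖ ≤ M_CL * (‖f‖ + ‖g‖)^2 := by
    intro f g
    rw [hBform f g]
    have key : ∀ u : H, ‖u‖ ≤ ‖f‖ + ‖g‖ → ‖Q u‖ ≤ M_CL * (‖f‖ + ‖g‖)^2 := by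
      intro u hu
      refine le_trans (hQnorm u) ?_
      have : ‖u‖^2 ≤ (‖f‖ + ‖g‖)^2 := by
        apply pow_le_pow_left₀ (norm_nonneg u) hu
      nlinarith
    have h0 : ‖Q (f+g)‖ ≤ M_CL * (‖f‖ + ‖g‖)^2 := key _ (norm_add_le f g)
    have h2 : ‖Q (f-g)‖ ≤ M_CL * (‖f‖ + ‖g‖)^2 := key _ (norm_sub_le f g)
    have h1 : ‖Q (f + Complex.I • g)‖ ≤ M_CL * (‖f‖ + ‖g‖)^2 := by
      refine key _ (le_trans (norm_add_le _ _) ?_)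
      simp [norm_smul]
    have h3 : ‖Q (f - Complex.I • g)‖ ≤ M_CL * (‖f‖ + ‖g‖)^2 := by
      refine key _ (le_trans (norm_sub_le _ _) ?_)
      simp [norm_smul]
    have e1 : ‖Q (f+g) - Q (f-g) + Complex.I * Q (f + Complex.I • g)
          - Complex.I * Q (f - Complex.I • g)‖
        ≤ ‖Q (f+g)‖ + ‖Q (f-g)‖ + ‖Q (f + Complex.I • g)‖ + ‖Q (f - Complex.I • g)‖ := by
      have a1 := norm_sub_le (Q (f+g) - Q (f-g) + Complex.I * Q (f + Complex.I • g))
        (Complex.I * Q (f - Complex.I • g))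
      have a2 := norm_add_le (Q (f+g) - Q (f-g)) (Complex.I * Q (f + Complex.I • g))
      have a3 := norm_sub_le (Q (f+g)) (Q (f-g))
      have b1 : ‖Complex.I * Q (f + Complex.I • g)‖ = ‖Q (f + Complex.I • g)‖ := by
        rw [norm_mul, Complex.norm_I, one_mul]
      have b2 : ‖Complex.I * Q (f - Complex.I • g)‖ = ‖Q (f - Complex.I • g)‖ := by
        rw [norm_mul, Complex.norm_I, one_mul]
      linarith
    rw [norm_mul, show ‖(4⁻¹:ℂ)‖ = (4⁻¹:ℝ) by norm_num]
    calc (4⁻¹:ℝ) * ‖Q (f+g) - Q (f-g) + Complex.I * Q (f + Complex.I • g)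
          - Complex.I * Q (f - Complex.I • g)‖
        ≤ 4⁻¹ * (‖Q (f+g)‖ + ‖Q (f-g)‖ + ‖Q (f + Complex.I • g)‖
          + ‖Q (f - Complex.I • g)‖) := by
          exact mul_le_mul_of_nonneg_left e1 (by norm_num)
      _ ≤ 4⁻¹ * (4 * (M_CL * (‖f‖ + ‖g‖)^2)) := by
          apply mul_le_mul_of_nonneg_left _ (by norm_num : (0:ℝ) ≤ 4⁻¹)
          linarith
      _ = M_CL * (‖f‖ + ‖g‖)^2 := by ring
  -- integrability and value of ∫ ‖⟪F ω, f⟫‖²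
  have hsq_fun : ∀ f : H, (fun ω => ⟪F ω, f⟫ * ⟪D' f, C (F ω)⟫)
      = fun ω => ((‖⟪F ω, f⟫‖^2 : ℝ) : ℂ) := by
    intro f
    funext ω
    rw [hD'inner f (F ω),
      show ⟪f, F ω⟫ = (starRingEnd ℂ) ⟪F ω, f⟫ from (inner_conj_symm _ _).symm,
      RCLike.mul_conj]
    norm_cast
  have hInt2 : ∀ f : H, Integrable (fun ω => ‖⟪F ω, f⟫‖^2) μ := by
    intro f
    have h := hIntPair f (D' f)
    rw [hsq_fun f] at h
    simpa only [RCLike.re_to_complex, Complex.ofReal_re] using h.re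
  have hval : ∀ f : H, (∫ ω, ‖⟪F ω, f⟫‖^2 ∂μ : ℝ) ≤ M_CL * (‖f‖ + ‖D' f‖)^2 := by
    intro f
    have h := hBnorm f (D' f)
    have heq : ∫ ω, ⟪F ω, f⟫ * ⟪D' f, C (F ω)⟫ ∂μ = ((∫ ω, ‖⟪F ω, f⟫‖^2 ∂μ : ℝ) : ℂ) := by
      rw [hsq_fun f]
      exact integral_ofReal
    rw [heq] at h
    refine le_trans ?_ h
    rw [Complex.norm_real, Real.norm_eq_abs]
    exact le_abs_self _
  -- upper frame bound constant
  set Bc : ℝ := M_CL * (1 + ‖D'‖)^2 with hBc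
  have hBcpos : 0 < Bc := by positivity
  have hUpper2 : ∀ f : H, ∫ ω, ‖⟪F ω, f⟫‖^2 ∂μ ≤ Bc * ‖f‖^2 := by
    intro f
    refine le_trans (hval f) ?_
    have h1 : ‖D' f‖ ≤ ‖D'‖ * ‖f‖ := D'.le_opNorm f
    have h2 : ‖f‖ + ‖D' f‖ ≤ (1 + ‖D'‖) * ‖f‖ := by nlinarith [norm_nonneg f]
    have h3 : (‖f‖ + ‖D' f‖)^2 ≤ ((1 + ‖D'‖) * ‖f‖)^2 := by
      apply pow_le_pow_left₀ (by positivity) h2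
    calc M_CL * (‖f‖ + ‖D' f‖)^2 ≤ M_CL * ((1 + ‖D'‖) * ‖f‖)^2 := by nlinarith
      _ = Bc * ‖f‖^2 := by rw [hBc]; ring
  -- lower frame bound
  set L : ℝ := 1 + ‖D‖ with hL
  have hLpos : 0 < L := by positivity
  set ε : ℝ := Bc * L^2 / m_CL with hε
  have hεpos : 0 < ε := by positivity
  set A : ℝ := m_CL / ε with hA
  have hApos : 0 < A := by positivity
  have hLower2 : ∀ f : H, A * ‖f‖^2 ≤ ∫ ω, ‖⟪F ω, f⟫‖^2 ∂μ := by
    intro f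
    -- m‖f‖² ≤ ‖Q f‖ ≤ ∫ ‖integrand‖
    have h1 : m_CL * ‖f‖^2 ≤ ‖Q f‖ := by
      have := (hQre f).1
      refine le_trans this (le_trans (le_abs_self _) ?_)
      exact Complex.abs_re_le_norm _
    have h2 : ‖Q f‖ ≤ ∫ ω, ‖⟪F ω, f⟫ * ⟪f, C (F ω)⟫‖ ∂μ :=
      norm_integral_le_integral_norm _
    -- pointwise bound
    have hpt : ∀ ω : Ω, ‖⟪F ω, f⟫ * ⟪f, C (F ω)⟫‖ ≤
        (ε/2) * ‖⟪F ω, f⟫‖^2 + (1/(2*ε)) * ‖⟪F ω, D f⟫‖^2 := by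
      intro ω
      rw [norm_mul, hDinner f (F ω), ← norm_inner_symm (F ω) (D f)]
      set u := ‖⟪F ω, f⟫‖
      set v := ‖⟪F ω, D f⟫‖
      have huv : 2 * ε * (u * v) ≤ ε^2 * u^2 + v^2 := by nlinarith [sq_nonneg (ε*u - v)]
      have := mul_le_mul_of_nonneg_left huv (le_of_lt (by positivity : (0:ℝ) < 1/(2*ε)))
      calc u * v = (1/(2*ε)) * (2 * ε * (u*v)) := by field_simp
        _ ≤ (1/(2*ε)) * (ε^2 * u^2 + v^2) := by
            apply mul_le_mul_of_nonneg_left huv (by positivity)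
        _ = (ε/2) * u^2 + (1/(2*ε)) * v^2 := by field_simp
    have h3 : ∫ ω, ‖⟪F ω, f⟫ * ⟪f, C (F ω)⟫‖ ∂μ ≤
        ∫ ω, ((ε/2) * ‖⟪F ω, f⟫‖^2 + (1/(2*ε)) * ‖⟪F ω, D f⟫‖^2) ∂μ := by
      refine integral_mono (h_int f).norm ?_ hpt
      exact ((hInt2 f).const_mul _).add ((hInt2 (D f)).const_mul _)
    have h4 : ∫ ω, ((ε/2) * ‖⟪F ω, f⟫‖^2 + (1/(2*ε)) * ‖⟪F ω, D f⟫‖^2) ∂μ =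
        (ε/2) * ∫ ω, ‖⟪F ω, f⟫‖^2 ∂μ + (1/(2*ε)) * ∫ ω, ‖⟪F ω, D f⟫‖^2 ∂μ := by
      rw [integral_add ((hInt2 f).const_mul _) ((hInt2 (D f)).const_mul _),
        integral_const_mul _ _, integral_const_mul _ _]
    have h5 : ∫ ω, ‖⟪F ω, D f⟫‖^2 ∂μ ≤ Bc * L^2 * ‖f‖^2 := by
      refine le_trans (hUpper2 (D f)) ?_
      have hDf : ‖D f‖ ≤ L * ‖f‖ := by
        refine le_trans (D.le_opNorm f) ?_
        rw [hL]; nlinarith [norm_nonneg f]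
      have : ‖D f‖^2 ≤ (L * ‖f‖)^2 := pow_le_pow_left₀ (norm_nonneg _) hDf 2
      nlinarith
    have h6 : (1/(2*ε)) * (Bc * L^2 * ‖f‖^2) = (m_CL/2) * ‖f‖^2 := by
      rw [hε]; field_simp
    have h7 : m_CL * ‖f‖^2 ≤ (ε/2) * ∫ ω, ‖⟪F ω, f⟫‖^2 ∂μ + (m_CL/2) * ‖f‖^2 := by
      have := le_trans h1 (le_trans h2 (le_trans h3 (le_of_eq h4)))
      have h8 : (1/(2*ε)) * ∫ ω, ‖⟪F ω, D f⟫‖^2 ∂μ ≤ (m_CL/2) * ‖f‖^2 := by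
        rw [← h6]
        apply mul_le_mul_of_nonneg_left h5 (by positivity)
      linarith
    have h9 : (m_CL/2) * ‖f‖^2 ≤ (ε/2) * ∫ ω, ‖⟪F ω, f⟫‖^2 ∂μ := by linarith
    rw [hA]
    rw [div_mul_eq_mul_div, div_le_iff₀ hεpos]
    nlinarith
  -- convert to lintegrals
  have hlin : ∀ f : H, ∫⁻ ω, (‖⟪F ω, f⟫‖₊ : ENNReal) ^ 2 ∂μ
      = ENNReal.ofReal (∫ ω, ‖⟪F ω, f⟫‖^2 ∂μ) := by
    intro f
    rw [ofReal_integral_eq_lintegral_ofReal (hInt2 f)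
      (Filter.Eventually.of_forall fun ω => by positivity)]
    refine lintegral_congr fun ω => ?_
    rw [ENNReal.ofReal_pow (norm_nonneg _), ofReal_norm, enorm_eq_nnnorm]
  refine ⟨A, Bc, hApos, fun f => ?_, fun f => ?_⟩
  · rw [hlin f]
    exact ENNReal.ofReal_le_ofReal (hLower2 f)
  · rw [hlin f]
    exact ENNReal.ofReal_le_ofReal (hUpper2 f)
end

section
/- Let C ∈ GL(H) be self-adjoint and let F : Ω → H be weakly measurable such that ω ↦ ⟨f, F(ω)⟩⟨C F(ω), f⟩ is integrable for all f ∈ H. Then F is a C-controlled continuous frame (i.e., there exist 0 < m_CL ≤ M_CL with m_CL ‖f‖² ≤ ∫_Ω ⟨f, F(ω)⟩⟨C F(ω), f⟩ dμ(ω) ≤ M_CL ‖f‖² for all f) if and only if F is a continuous frame for H, C is a positive operator, and C commutes with the frame operator S_F of F. -/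
open MeasureTheory
open scoped ComplexOrder

local notation "⟪" x ", " y "⟫" => @inner ℂ _ _ x y

section Aux

variable {H : Type} [NormedAddCommGroup H] [InnerProductSpace ℂ H] [CompleteSpace H]

lemma commute_of_mem_elemental {b a y : H →L[ℂ] H} (h1 : Commute b a)
    (h2 : Commute b (star a)) (hy : y ∈ StarAlgebra.elemental ℂ a) : Commute b y := by
  induction hy using StarAlgebra.elemental.induction_on with
  | self => exact h1
  | star_self => exact h2
  | algebraMap r => exact (Algebra.commutes r b).symm
  | add u hu v hv pu pv => exact pu.add_right pv
  | mul u hu v hv pu pv => exact pu.mul_right pv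
  | closure s hs hP v hv =>
      have hcl : IsClosed {x : H →L[ℂ] H | Commute b x} :=
        isClosed_eq (continuous_const.mul continuous_id) (continuous_id.mul continuous_const)
      exact closure_minimal (fun u hu => hP u hu) hcl hv

lemma cfc_mem_elemental' (g : ℂ → ℂ) (a : H →L[ℂ] H) :
    cfc g a ∈ StarAlgebra.elemental ℂ a := by
  refine cfc_cases (· ∈ StarAlgebra.elemental ℂ a) a g (zero_mem _) fun hg ha => ?_
  rw [cfcHom_eq_of_isStarNormal]
  exact SetLike.coe_mem _

lemma exists_sqrt {T : H →L[ℂ] H} (hT : (0 : H →L[ℂ] H) ≤ T) :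
    ∃ R : H →L[ℂ] H, IsSelfAdjoint R ∧ R * R = T ∧
      ∀ b : H →L[ℂ] H, Commute b T → Commute b R := by
  have hTsa : IsSelfAdjoint T := .of_nonneg hT
  refine ⟨cfc Real.sqrt T, cfc_predicate Real.sqrt T, ?_, ?_⟩
  · rw [← cfc_mul Real.sqrt Real.sqrt T]
    have h : (spectrum ℝ T).EqOn (fun x => Real.sqrt x * Real.sqrt x) id := fun x hx =>
      Real.mul_self_sqrt (spectrum_nonneg_of_nonneg hT hx)
    rw [cfc_congr h, cfc_id ℝ T]
  · intro b hb
    rw [cfc_real_eq_complex Real.sqrt hTsa]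
    exact commute_of_mem_elemental hb (by rwa [hTsa.star_eq]) (cfc_mem_elemental' _ T)

omit [CompleteSpace H] in
lemma isUnit_of_sq {R T : H →L[ℂ] H} (hRR : R * R = T) (hT : IsUnit T) : IsUnit R := by
  obtain ⟨u, rfl⟩ := hT
  have hcomm : Commute R ↑u := by
    rw [← hRR]; exact (Commute.refl R).mul_right (Commute.refl R)
  have hinv : Commute R ↑u⁻¹ := hcomm.units_inv_right
  refine ⟨⟨R, R * ↑u⁻¹, ?_, ?_⟩, rfl⟩
  · rw [← mul_assoc, hRR]; exact u.mul_inv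
  · rw [hinv.eq, mul_assoc, hRR]; exact u.inv_mul

end Aux

/-- For self-adjoint `C ∈ GL(H)` and weakly measurable `F`, `F` is a `C`-controlled
continuous frame if and only if `F` is a continuous frame, `C` is positive and `C` commutes
with the frame operator `S_F` (given here weakly by `⟨S_F f, g⟩ = ∫ ⟨f, F(ω)⟩⟨F(ω), g⟩ dμ`).
Inequalities between complex numbers are taken in the complex order; in Mathlib's
convention the paper's `⟨x, y⟩` is `⟪y, x⟫`. -/
theorem controlled_frame_iff_frame_positive_commutes
    {Ω : Type} [MeasurableSpace Ω] (μ : Measure Ω)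
    {H : Type} [NormedAddCommGroup H] [InnerProductSpace ℂ H] [CompleteSpace H]
    (C : H ≃L[ℂ] H) (hC_sa : IsSelfAdjoint (C : H →L[ℂ] H))
    (F : Ω → H)
    (hF_meas : ∀ f : H, Measurable fun ω => ⟪F ω, f⟫)
    (h_int : ∀ f : H, Integrable (fun ω => ⟪F ω, f⟫ * ⟪f, C (F ω)⟫) μ)
    (S : H →L[ℂ] H)
    (hS_int : ∀ f g : H, Integrable (fun ω => ⟪F ω, f⟫ * ⟪g, F ω⟫) μ)
    (hS : ∀ f g : H, ⟪g, S f⟫ = ∫ ω, ⟪F ω, f⟫ * ⟪g, F ω⟫ ∂μ) :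
    (∃ m_CL M_CL : ℝ, 0 < m_CL ∧ m_CL ≤ M_CL ∧
      (∀ f : H,
        (m_CL * ‖f‖ ^ 2 : ℂ) ≤ ∫ ω, ⟪F ω, f⟫ * ⟪f, C (F ω)⟫ ∂μ) ∧
      (∀ f : H,
        ∫ ω, ⟪F ω, f⟫ * ⟪f, C (F ω)⟫ ∂μ ≤ (M_CL * ‖f‖ ^ 2 : ℂ)))
    ↔
    ((∃ A B : ℝ, 0 < A ∧
        (∀ f : H,
          ENNReal.ofReal (A * ‖f‖ ^ 2) ≤ ∫⁻ ω, (‖⟪F ω, f⟫‖₊ : ENNReal) ^ 2 ∂μ) ∧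
        (∀ f : H,
          ∫⁻ ω, (‖⟪F ω, f⟫‖₊ : ENNReal) ^ 2 ∂μ ≤ ENNReal.ofReal (B * ‖f‖ ^ 2))) ∧
      (∀ f : H, f ≠ 0 → (0 : ℂ) < ⟪f, C f⟫) ∧
      (C : H →L[ℂ] H).comp S = S.comp (C : H →L[ℂ] H)) := by
  set Cc : H →L[ℂ] H := (C : H →L[ℂ] H) with hCc
  have hCc_app : ∀ x, C x = Cc x := fun _ => rfl
  have hC_symm : ∀ x y : H, ⟪Cc x, y⟫ = ⟪x, Cc y⟫ :=
    ContinuousLinearMap.isSelfAdjoint_iff_isSymmetric.mp hC_sa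
  -- S is self-adjoint
  have hS_sa : IsSelfAdjoint S := by
    rw [ContinuousLinearMap.isSelfAdjoint_iff_isSymmetric]
    intro x y
    calc ⟪S x, y⟫ = (starRingEnd ℂ) ⟪y, S x⟫ := (inner_conj_symm _ _).symm
      _ = (starRingEnd ℂ) (∫ ω, ⟪F ω, x⟫ * ⟪y, F ω⟫ ∂μ) := by rw [hS x y]
      _ = ∫ ω, (starRingEnd ℂ) (⟪F ω, x⟫ * ⟪y, F ω⟫) ∂μ := integral_conj.symm
      _ = ∫ ω, ⟪F ω, y⟫ * ⟪x, F ω⟫ ∂μ := by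
          refine integral_congr_ae (Filter.Eventually.of_forall fun ω => ?_)
          simp only [map_mul, inner_conj_symm]
          ring_nf
      _ = ⟪x, S y⟫ := (hS y x).symm
  have hS_symm : ∀ x y : H, ⟪S x, y⟫ = ⟪x, S y⟫ :=
    ContinuousLinearMap.isSelfAdjoint_iff_isSymmetric.mp hS_sa
  -- the pointwise identity and the real-valued frame integral g
  set g : H → ℝ := fun f => ∫ ω, ‖⟪F ω, f⟫‖ ^ 2 ∂μ with hgdef
  have hpt : ∀ (f : H) (ω : Ω), ⟪F ω, f⟫ * ⟪f, F ω⟫ = ((‖⟪F ω, f⟫‖ ^ 2 : ℝ) : ℂ) := by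
    intro f ω
    rw [← inner_conj_symm f (F ω), Complex.mul_conj, Complex.normSq_eq_norm_sq]
  have key2 : ∀ f : H, ⟪f, S f⟫ = ((g f : ℝ) : ℂ) := by
    intro f
    rw [hS f f]
    simp_rw [hpt f]
    exact integral_ofReal
  have hg_nonneg : ∀ f, 0 ≤ g f := fun f => integral_nonneg fun ω => by positivity
  have hg_int : ∀ f : H, Integrable (fun ω => ‖⟪F ω, f⟫‖ ^ 2) μ := by
    intro f
    have h := (hS_int f f).re
    exact h.congr (Filter.Eventually.of_forall fun ω => by
      simp only [hpt f ω, RCLike.re_to_complex, Complex.ofReal_re])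
  have key3 : ∀ f : H,
      ∫⁻ ω, (‖⟪F ω, f⟫‖₊ : ENNReal) ^ 2 ∂μ = ENNReal.ofReal (g f) := by
    intro f
    rw [hgdef]
    rw [ofReal_integral_eq_lintegral_ofReal (hg_int f)
      (Filter.Eventually.of_forall fun ω => by positivity)]
    refine lintegral_congr fun ω => ?_
    rw [ENNReal.ofReal_pow (norm_nonneg _), ofReal_norm, enorm_eq_nnnorm]
  -- T = C * S and the key integral identity
  set T : H →L[ℂ] H := Cc * S with hTdef
  have key1 : ∀ f : H, ∫ ω, ⟪F ω, f⟫ * ⟪f, C (F ω)⟫ ∂μ = ⟪f, T f⟫ := by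
    intro f
    have h1 : ∀ ω, ⟪f, C (F ω)⟫ = ⟪Cc f, F ω⟫ := fun ω => (hC_symm f (F ω)).symm
    simp_rw [h1]
    rw [← hS f (Cc f)]
    rw [hTdef, ContinuousLinearMap.mul_apply]
    exact hC_symm f (S f)
  -- S is positive
  have hS_pos : (0 : H →L[ℂ] H) ≤ S := by
    rw [ContinuousLinearMap.nonneg_iff_isPositive]
    refine ⟨hS_sa.isSymmetric, fun x => ?_⟩
    have h : ⟪S x, x⟫ = ((g x : ℝ) : ℂ) := by rw [hS_symm x x, key2 x]
    simp only [ContinuousLinearMap.reApplyInnerSelf]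
    rw [show (⟪S x, x⟫ : ℂ) = ((g x : ℝ) : ℂ) from h]
    simpa using hg_nonneg x
  -- square root of S
  obtain ⟨R, hR_sa, hRR, hR_comm⟩ := exists_sqrt hS_pos
  have hR_symm : ∀ x y : H, ⟪R x, y⟫ = ⟪x, R y⟫ :=
    ContinuousLinearMap.isSelfAdjoint_iff_isSymmetric.mp hR_sa
  have hSx : ∀ x y : H, ⟪x, S y⟫ = ⟪R x, R y⟫ := by
    intro x y
    rw [← hRR, ContinuousLinearMap.mul_apply]
    exact (hR_symm x (R y)).symm
  have hRnorm : ∀ x : H, ‖R x‖ ^ 2 = g x := by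
    intro x
    have h : ((‖R x‖ ^ 2 : ℝ) : ℂ) = ((g x : ℝ) : ℂ) := by
      rw [← key2 x, hSx x x, inner_self_eq_norm_sq_to_K]
      norm_cast
    exact_mod_cast h
  -- C is a unit
  have hC_unit : IsUnit Cc := by
    refine ⟨⟨Cc, (C.symm : H →L[ℂ] H), ?_, ?_⟩, rfl⟩
    · ext x; simp [hCc, ContinuousLinearMap.mul_apply]
    · ext x; simp [hCc, ContinuousLinearMap.mul_apply]
  constructor
  · -- forward direction
    rintro ⟨m, M, hm, hmM, hlow, hup⟩
    have hTf : ∀ f : H, ⟪f, T f⟫ = ((⟪f, T f⟫.re : ℝ) : ℂ) ∧ m * ‖f‖ ^ 2 ≤ ⟪f, T f⟫.re := by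
      intro f
      have h := hlow f; rw [key1 f] at h
      have h' : ((m * ‖f‖ ^ 2 : ℝ) : ℂ) ≤ ⟪f, T f⟫ :=
        le_of_eq_of_le (by push_cast; ring) h
      obtain ⟨h1, h2⟩ := Complex.le_def.mp h'
      rw [Complex.ofReal_re] at h1
      rw [Complex.ofReal_im] at h2
      refine ⟨?_, h1⟩
      apply Complex.ext
      · simp
      · simp [← h2]
    have hT_pos : T.IsPositive := by
      rw [ContinuousLinearMap.isPositive_iff_complex]
      intro x
      have h1 : ⟪T x, x⟫ = ((⟪x, T x⟫.re : ℝ) : ℂ) := by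
        rw [← inner_conj_symm (T x) x]
        conv_lhs => rw [(hTf x).1]
        simp
      have h2 : 0 ≤ ⟪x, T x⟫.re := le_trans (by positivity) (hTf x).2
      constructor
      · rw [h1]; simp [RCLike.re_to_complex]
      · rw [h1]; simpa [RCLike.re_to_complex] using h2
    have hT_sa : IsSelfAdjoint T := hT_pos.isSelfAdjoint
    have hCS_comm : Commute Cc S := by
      have h : star (Cc * S) = S * Cc := by rw [star_mul, hS_sa.star_eq, hC_sa.star_eq]
      show Cc * S = S * Cc
      rw [← h]
      exact (hT_sa.star_eq).symm
    have hcomp : Cc.comp S = S.comp Cc := hCS_comm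
    have hCR : Commute Cc R := hR_comm Cc hCS_comm
    -- T is a unit
    have hT_unit : IsUnit T := by
      refine ContinuousLinearMap.isUnit_of_forall_le_norm_inner_map T
        (c := ⟨m, hm.le⟩) (by exact_mod_cast hm) fun x => ?_
      have h := (hTf x).2
      have hnorm : ‖(⟪T x, x⟫ : ℂ)‖ = ‖(⟪x, T x⟫ : ℂ)‖ := by
        rw [← inner_conj_symm (T x) x]
        exact RCLike.norm_conj (K := ℂ) _

      calc ‖x‖ ^ 2 * (⟨m, hm.le⟩ : NNReal) = m * ‖x‖ ^ 2 := by
            simp [mul_comm]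
        _ ≤ ⟪x, T x⟫.re := h
        _ ≤ ‖(⟪x, T x⟫ : ℂ)‖ := Complex.re_le_norm _
        _ = ‖(⟪T x, x⟫ : ℂ)‖ := hnorm.symm
    have hS_unit : IsUnit S := by
      have h1 : (C.symm : H →L[ℂ] H) * Cc = 1 := by
        ext x; simp [hCc, ContinuousLinearMap.mul_apply]
      have h1' : Cc * (C.symm : H →L[ℂ] H) = 1 := by
        ext x; simp [hCc, ContinuousLinearMap.mul_apply]
      have h2 : ((C.symm : H →L[ℂ] H)) * T = S := by
        rw [hTdef, ← mul_assoc, h1, one_mul]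
      have hCsym_unit : IsUnit ((C.symm : H →L[ℂ] H)) := ⟨⟨(C.symm : H →L[ℂ] H), Cc, h1, h1'⟩, rfl⟩
      rw [← h2]
      exact hCsym_unit.mul hT_unit
    have hR_unit : IsUnit R := isUnit_of_sq hRR hS_unit
    obtain ⟨u, hu⟩ := hR_unit
    have hRCR : R * (Cc * R) = T := by
      rw [hCR.eq, ← mul_assoc, hRR, hTdef, hCS_comm.eq]
    -- C is positive
    have hC_pos : ∀ f : H, f ≠ 0 → (0 : ℂ) < ⟪f, C f⟫ := by
      intro f hf
      set x := (↑u⁻¹ : H →L[ℂ] H) f with hx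
      have hfx : R x = f := by
        rw [hx, ← hu, ← ContinuousLinearMap.mul_apply, u.mul_inv,
          ContinuousLinearMap.one_apply]
      have hx0 : x ≠ 0 := fun h => hf (by rw [← hfx, h, map_zero])
      have heq : ⟪f, Cc f⟫ = ⟪x, T x⟫ := by
        rw [← hfx]
        calc ⟪R x, Cc (R x)⟫ = ⟪x, R (Cc (R x))⟫ := hR_symm x _
          _ = ⟪x, T x⟫ := by rw [← hRCR]; simp [ContinuousLinearMap.mul_apply]
      rw [hCc_app, heq, (hTf x).1]
      rw [Complex.zero_lt_real]
      have hxpos : 0 < m * ‖x‖ ^ 2 := by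
        have : 0 < ‖x‖ := norm_pos_iff.mpr hx0
        positivity
      exact lt_of_lt_of_le hxpos (hTf x).2
    -- frame bounds
    refine ⟨⟨m ^ 2 / ((‖R‖ * ‖Cc‖) ^ 2 + 1), ‖S‖, by positivity, ?_, ?_⟩, hC_pos, hcomp⟩
    · intro f
      rw [key3 f]
      apply ENNReal.ofReal_le_ofReal
      rcases eq_or_ne f 0 with rfl | hf
      · simpa using hg_nonneg 0
      · set D := ‖R‖ * ‖Cc‖ with hD
        have hD0 : 0 ≤ D := by positivity
        have h1 : m * ‖f‖ ^ 2 ≤ D * (‖f‖ * ‖R f‖) := by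
          have h2 : ⟪f, T f⟫ = ⟪R (Cc f), R f⟫ := by
            calc ⟪f, T f⟫ = ⟪f, Cc (S f)⟫ := by rw [hTdef]; simp [ContinuousLinearMap.mul_apply]
              _ = ⟪Cc f, S f⟫ := (hC_symm f (S f)).symm
              _ = ⟪R (Cc f), R f⟫ := hSx (Cc f) f
          calc m * ‖f‖ ^ 2 ≤ ⟪f, T f⟫.re := (hTf f).2
            _ ≤ ‖(⟪f, T f⟫ : ℂ)‖ := Complex.re_le_norm _
            _ = ‖(⟪R (Cc f), R f⟫ : ℂ)‖ := by rw [h2]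
            _ ≤ ‖R (Cc f)‖ * ‖R f‖ := norm_inner_le_norm _ _
            _ ≤ (‖R‖ * (‖Cc‖ * ‖f‖)) * ‖R f‖ := by
                gcongr
                exact le_trans (R.le_opNorm _) (by gcongr; exact Cc.le_opNorm f)
            _ = D * (‖f‖ * ‖R f‖) := by rw [hD]; ring
        have hf' : 0 < ‖f‖ := norm_pos_iff.mpr hf
        have h3 : m * ‖f‖ ≤ D * ‖R f‖ := by nlinarith
        have h4 : (m * ‖f‖) ^ 2 ≤ (D * ‖R f‖) ^ 2 := by
          apply pow_le_pow_left₀ (by positivity) h3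
        have h5 : ‖R f‖ ^ 2 = g f := hRnorm f
        rw [div_mul_eq_mul_div, div_le_iff₀ (by positivity)]
        nlinarith [hg_nonneg f]
    · intro f
      rw [key3 f]
      apply ENNReal.ofReal_le_ofReal
      have hgre : g f = ⟪f, S f⟫.re := by rw [key2 f]; simp
      rw [hgre]
      calc ⟪f, S f⟫.re ≤ ‖(⟪f, S f⟫ : ℂ)‖ := Complex.re_le_norm _
        _ ≤ ‖f‖ * ‖S f‖ := norm_inner_le_norm _ _
        _ ≤ ‖f‖ * (‖S‖ * ‖f‖) := by gcongr; exact S.le_opNorm f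
        _ = ‖S‖ * ‖f‖ ^ 2 := by ring
  · -- reverse direction
    rintro ⟨⟨A, B, hA, hlow, _⟩, hCpos, hcomp⟩
    have hCS_comm : Commute Cc S := hcomp
    have hCR : Commute Cc R := hR_comm Cc hCS_comm
    have hgA : ∀ f : H, A * ‖f‖ ^ 2 ≤ g f := by
      intro f
      have h := hlow f; rw [key3 f] at h
      exact (ENNReal.ofReal_le_ofReal_iff (hg_nonneg f)).mp h
    have hC_pos' : (0 : H →L[ℂ] H) ≤ Cc := by
      rw [ContinuousLinearMap.nonneg_iff_isPositive]
      refine ⟨hC_sa.isSymmetric, fun x => ?_⟩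
      simp only [ContinuousLinearMap.reApplyInnerSelf]
      rcases eq_or_ne x 0 with rfl | hx
      · simp
      · have h := hCpos x hx
        rw [hCc_app] at h
        have h2 : (0 : ℝ) < ⟪x, Cc x⟫.re := (Complex.lt_def.mp h).1
        have h3 : ⟪Cc x, x⟫.re = ⟪x, Cc x⟫.re := congrArg Complex.re (hC_symm x x)
        show (0 : ℝ) ≤ RCLike.re ⟪Cc x, x⟫
        rw [show (RCLike.re ⟪Cc x, x⟫ : ℝ) = ⟪Cc x, x⟫.re from rfl, h3]
        exact h2.le
    obtain ⟨Q, hQ_sa, hQQ, hQ_comm⟩ := exists_sqrt hC_pos'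
    have hQ_symm : ∀ x y : H, ⟪Q x, y⟫ = ⟪x, Q y⟫ :=
      ContinuousLinearMap.isSelfAdjoint_iff_isSymmetric.mp hQ_sa
    have hQ_unit : IsUnit Q := isUnit_of_sq hQQ hC_unit
    obtain ⟨v, hv⟩ := hQ_unit
    set nv := ‖(↑v⁻¹ : H →L[ℂ] H)‖ with hnv
    have hQ_low : ∀ x : H, ‖x‖ ^ 2 ≤ (nv ^ 2 + 1) * ‖Q x‖ ^ 2 := by
      intro x
      have hxeq : x = (↑v⁻¹ : H →L[ℂ] H) (Q x) := by
        rw [← hv, ← ContinuousLinearMap.mul_apply, v.inv_mul, ContinuousLinearMap.one_apply]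
      have h1 : ‖x‖ ≤ nv * ‖Q x‖ := by
        conv_lhs => rw [hxeq]
        exact (↑v⁻¹ : H →L[ℂ] H).le_opNorm _
      nlinarith [norm_nonneg x, norm_nonneg (Q x), sq_nonneg nv]
    have hRCR : R * (Cc * R) = T := by
      rw [hCR.eq, ← mul_assoc, hRR, hTdef, hCS_comm.eq]
    have hform : ∀ f : H, ⟪f, T f⟫ = ((‖Q (R f)‖ ^ 2 : ℝ) : ℂ) := by
      intro f
      have h1 : ⟪f, T f⟫ = ⟪R f, Cc (R f)⟫ := by
        rw [← hRCR]
        simp only [ContinuousLinearMap.mul_apply]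
        exact (hR_symm f _).symm
      have h2 : ⟪R f, Cc (R f)⟫ = ⟪Q (R f), Q (R f)⟫ := by
        rw [← hQQ, ContinuousLinearMap.mul_apply]
        exact (hQ_symm (R f) _).symm
      rw [h1, h2, inner_self_eq_norm_sq_to_K]
      norm_cast
    set c : ℝ := 1 / (nv ^ 2 + 1) with hc
    have hc0 : 0 < c := by rw [hc]; positivity
    refine ⟨A * c, max (A * c) ((‖Q‖ * ‖R‖) ^ 2), by positivity, le_max_left _ _, ?_, ?_⟩
    · intro f
      rw [key1 f, hform f]
      refine le_of_eq_of_le (b := ((A * c * ‖f‖ ^ 2 : ℝ) : ℂ)) (by push_cast; ring) ?_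
      rw [Complex.real_le_real]
      have h1 := hQ_low (R f)
      have h2 : A * ‖f‖ ^ 2 ≤ ‖R f‖ ^ 2 := by rw [hRnorm f]; exact hgA f
      rw [hc]
      rw [mul_one_div, div_mul_eq_mul_div, div_le_iff₀ (by positivity)]
      nlinarith [norm_nonneg (Q (R f)), sq_nonneg nv]
    · intro f
      rw [key1 f, hform f]
      refine le_of_le_of_eq (b := ((max (A * c) ((‖Q‖ * ‖R‖) ^ 2) * ‖f‖ ^ 2 : ℝ) : ℂ)) ?_
        (by push_cast; ring)
      rw [Complex.real_le_real]
      have h1 : ‖Q (R f)‖ ≤ ‖Q‖ * (‖R‖ * ‖f‖) :=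
        le_trans (Q.le_opNorm _) (by gcongr; exact R.le_opNorm f)
      have h2 : ‖Q (R f)‖ ^ 2 ≤ (‖Q‖ * ‖R‖) ^ 2 * ‖f‖ ^ 2 := by nlinarith [norm_nonneg (Q (R f))]
      calc ‖Q (R f)‖ ^ 2 ≤ (‖Q‖ * ‖R‖) ^ 2 * ‖f‖ ^ 2 := h2
        _ ≤ max (A * c) ((‖Q‖ * ‖R‖) ^ 2) * ‖f‖ ^ 2 := by gcongr; exact le_max_right _ _
end

section
/- Let F and G be weakly measurable maps from Ω to H with G a Bessel mapping with bound B_G, let m : Ω → ℂ be measurable, and let M : H → H be a bounded invertible operator satisfying ⟨M f, g⟩ = ∫_Ω m(ω)⟨f, F(ω)⟩⟨G(ω), g⟩ dμ(ω) for all f, g ∈ H (with the integrands integrable). Then the map ω ↦ conj(m(ω)) F(ω) satisfies the lower frame condition: for all f ∈ H, (1 / (√B_G · ‖(M*)⁻¹‖))² ‖f‖² ≤ ∫_Ω |m(ω)|² |⟨f, F(ω)⟩|² dμ(ω), where the right-hand side may be infinite. -/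
open MeasureTheory

local notation "⟪" x ", " y "⟫" => @inner ℂ _ _ x y

/-- If the multiplier `M_{m,F,G}` is bounded and invertible and `G` is Bessel with bound
`B_G`, then `conj(m) F` satisfies the lower frame condition with bound
`(1 / (√B_G ‖(M*)⁻¹‖))²`.  Here `(M*)⁻¹` is `Ring.inverse (adjoint M)`, the right-hand side
is a lower Lebesgue integral (it may be infinite), and in Mathlib's convention the paper's
`⟨x, y⟩` is `⟪y, x⟫`. -/
theorem lower_frame_condition_of_invertible_multiplier
    {Ω : Type} [MeasurableSpace Ω] (μ : Measure Ω)
    {H : Type} [NormedAddCommGroup H] [InnerProductSpace ℂ H] [CompleteSpace H]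
    (F G : Ω → H)
    (hF_meas : ∀ f : H, Measurable fun ω => ⟪F ω, f⟫)
    (hG_meas : ∀ f : H, Measurable fun ω => ⟪G ω, f⟫)
    (B_G : ℝ) (hBG : 0 < B_G)
    (hG_bessel : ∀ f : H,
      ∫⁻ ω, (‖⟪G ω, f⟫‖₊ : ENNReal) ^ 2 ∂μ ≤ ENNReal.ofReal (B_G * ‖f‖ ^ 2))
    (m : Ω → ℂ) (hm_meas : Measurable m)
    (M : H →L[ℂ] H) (hM_unit : IsUnit M)
    (hM_int : ∀ f g : H, Integrable (fun ω => m ω * ⟪F ω, f⟫ * ⟪g, G ω⟫) μ)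
    (hM : ∀ f g : H, ⟪g, M f⟫ = ∫ ω, m ω * ⟪F ω, f⟫ * ⟪g, G ω⟫ ∂μ) :
    ∀ f : H,
      ENNReal.ofReal
          ((1 / (Real.sqrt B_G * ‖Ring.inverse (ContinuousLinearMap.adjoint M)‖)) ^ 2
            * ‖f‖ ^ 2)
        ≤ ∫⁻ ω, (‖m ω‖₊ : ENNReal) ^ 2 * (‖⟪F ω, f⟫‖₊ : ENNReal) ^ 2 ∂μ := by
  intro f
  set I : ENNReal := ∫⁻ ω, (‖m ω‖₊ : ENNReal) ^ 2 * (‖⟪F ω, f⟫‖₊ : ENNReal) ^ 2 ∂μ with hI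
  by_cases hItop : I = ⊤
  · rw [hItop]; exact le_top
  set C : ℝ := ‖Ring.inverse (ContinuousLinearMap.adjoint M)‖ with hC
  have hCeq : C = ‖Ring.inverse M‖ := by
    rw [hC, ← ContinuousLinearMap.star_eq_adjoint, Ring.inverse_star, norm_star]
  have hinv : (Ring.inverse M) (M f) = f := by
    have h1 : Ring.inverse M * M = 1 := Ring.inverse_mul_cancel M hM_unit
    have := congrArg (fun T : H →L[ℂ] H => T f) h1
    simpa using this
  -- Step 1 : ‖f‖ ≤ C * ‖M f‖
  have hstep1 : ‖f‖ ≤ C * ‖M f‖ := by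
    rw [hCeq]
    conv_lhs => rw [← hinv]
    exact (Ring.inverse M).le_opNorm (M f)
  set a : ℝ := ‖M f‖ with ha
  have ha0 : 0 ≤ a := norm_nonneg _
  set Ir : ℝ := I.toReal with hIr
  have hIr0 : 0 ≤ Ir := ENNReal.toReal_nonneg
  -- Step 2 : key ENNReal estimate
  have key : (ENNReal.ofReal (a ^ 2)) ≤
      I ^ (1/2 : ℝ) * (ENNReal.ofReal (B_G * a ^ 2)) ^ (1/2 : ℝ) := by
    have hinner : ⟪M f, M f⟫ = ∫ ω, m ω * ⟪F ω, f⟫ * ⟪M f, G ω⟫ ∂μ := hM f (M f)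
    have h1 : ENNReal.ofReal (a ^ 2) = (‖⟪M f, M f⟫‖₊ : ENNReal) := by
      rw [inner_self_eq_norm_sq_to_K]
      rw [ENNReal.ofReal]
      norm_cast
      ext
      push_cast
      simp [ha, abs_of_nonneg (sq_nonneg ‖M f‖)]
    rw [h1, hinner]
    calc (‖∫ ω, m ω * ⟪F ω, f⟫ * ⟪M f, G ω⟫ ∂μ‖₊ : ENNReal)
        ≤ ∫⁻ ω, ‖m ω * ⟪F ω, f⟫ * ⟪M f, G ω⟫‖₊ ∂μ :=
          enorm_integral_le_lintegral_enorm _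
      _ = ∫⁻ ω, (((‖m ω‖₊ : ENNReal) * ‖⟪F ω, f⟫‖₊) * ‖⟪G ω, M f⟫‖₊) ∂μ := by
          apply lintegral_congr
          intro ω
          rw [nnnorm_mul, nnnorm_mul, ← inner_conj_symm (M f) (G ω), RCLike.nnnorm_conj]
          push_cast
          ring
      _ ≤ (∫⁻ ω, ((‖m ω‖₊ : ENNReal) * ‖⟪F ω, f⟫‖₊) ^ (2:ℝ) ∂μ) ^ (1/2 : ℝ)
          * (∫⁻ ω, ((‖⟪G ω, M f⟫‖₊ : ENNReal)) ^ (2:ℝ) ∂μ) ^ (1/2 : ℝ) := by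
          exact ENNReal.lintegral_mul_le_Lp_mul_Lq μ (⟨by norm_num, by norm_num, by norm_num⟩ : Real.HolderConjugate 2 2)
            (by
              apply Measurable.aemeasurable
              exact ((hm_meas.nnnorm.coe_nnreal_ennreal).mul
                ((hF_meas f).nnnorm.coe_nnreal_ennreal))
            )
            (by
              apply Measurable.aemeasurable
              exact ((hG_meas (M f)).nnnorm.coe_nnreal_ennreal)
            )
      _ ≤ I ^ (1/2 : ℝ) * (ENNReal.ofReal (B_G * a ^ 2)) ^ (1/2 : ℝ) := by
          gcongr
          · rw [hI]
            apply le_of_eq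
            apply lintegral_congr
            intro ω
            rw [show ((2:ℝ)) = ((2:ℕ) : ℝ) by norm_num, ENNReal.rpow_natCast]
            ring
          · calc ∫⁻ ω, ((‖⟪G ω, M f⟫‖₊ : ENNReal)) ^ (2:ℝ) ∂μ
                = ∫⁻ ω, ((‖⟪G ω, M f⟫‖₊ : ENNReal)) ^ (2:ℕ) ∂μ := by
                  apply lintegral_congr; intro ω
                  rw [show ((2:ℝ)) = ((2:ℕ) : ℝ) by norm_num, ENNReal.rpow_natCast]
              _ ≤ ENNReal.ofReal (B_G * ‖M f‖ ^ 2) := hG_bessel (M f)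
  -- convert key to a real inequality
  have hreal : a ^ 2 ≤ Real.sqrt Ir * Real.sqrt B_G * a := by
    have hfin : I ^ (1/2 : ℝ) * (ENNReal.ofReal (B_G * a ^ 2)) ^ (1/2 : ℝ) ≠ ⊤ := by
      apply ENNReal.mul_ne_top
      · exact ENNReal.rpow_ne_top_of_nonneg (by norm_num) hItop
      · exact ENNReal.rpow_ne_top_of_nonneg (by norm_num) ENNReal.ofReal_ne_top
    have := ENNReal.toReal_mono hfin key
    rw [ENNReal.toReal_ofReal (sq_nonneg a), ENNReal.toReal_mul, ← ENNReal.toReal_rpow,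
      ← ENNReal.toReal_rpow, ENNReal.toReal_ofReal (by positivity)] at this
    rw [← Real.sqrt_eq_rpow, ← Real.sqrt_eq_rpow] at this
    calc a ^ 2 ≤ Real.sqrt Ir * Real.sqrt (B_G * a ^ 2) := this
      _ = Real.sqrt Ir * (Real.sqrt B_G * a) := by
          rw [Real.sqrt_mul hBG.le, Real.sqrt_sq ha0]
      _ = Real.sqrt Ir * Real.sqrt B_G * a := by ring
  -- finish
  rw [← ENNReal.ofReal_toReal hItop]
  apply ENNReal.ofReal_le_ofReal
  by_cases haz : a = 0
  · have hf0 : f = 0 := by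
      rw [← hinv]
      have : M f = 0 := by rwa [← norm_eq_zero]
      rw [this, map_zero]
    rw [hf0]
    simp [hIr0]
  · have hapos : 0 < a := lt_of_le_of_ne ha0 (Ne.symm haz)
    have ha' : a ≤ Real.sqrt Ir * Real.sqrt B_G := by
      have := hreal
      nlinarith
    have hfle : ‖f‖ ≤ C * (Real.sqrt Ir * Real.sqrt B_G) := by
      calc ‖f‖ ≤ C * a := hstep1
        _ ≤ C * (Real.sqrt Ir * Real.sqrt B_G) := by
            apply mul_le_mul_of_nonneg_left ha' (hCeq ▸ norm_nonneg _)
    have hC0 : 0 ≤ C := hCeq ▸ norm_nonneg _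
    have hsq : ‖f‖ ^ 2 ≤ C ^ 2 * Ir * B_G := by
      have h2 := mul_self_le_mul_self (norm_nonneg f) hfle
      have hs1 : Real.sqrt Ir ^ 2 = Ir := Real.sq_sqrt hIr0
      have hs2 : Real.sqrt B_G ^ 2 = B_G := Real.sq_sqrt hBG.le
      have hexp : C * (Real.sqrt Ir * Real.sqrt B_G) * (C * (Real.sqrt Ir * Real.sqrt B_G))
          = C ^ 2 * Ir * B_G := by
        rw [show C * (Real.sqrt Ir * Real.sqrt B_G) * (C * (Real.sqrt Ir * Real.sqrt B_G))
          = C ^ 2 * Real.sqrt Ir ^ 2 * Real.sqrt B_G ^ 2 from by ring, hs1, hs2]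
      calc ‖f‖ ^ 2 = ‖f‖ * ‖f‖ := sq ‖f‖
        _ ≤ C * (Real.sqrt Ir * Real.sqrt B_G) * (C * (Real.sqrt Ir * Real.sqrt B_G)) := h2
        _ = C ^ 2 * Ir * B_G := hexp
    by_cases hCz : C = 0
    · rw [hCz]
      simp [hIr0]
    · have hCpos : 0 < C := lt_of_le_of_ne hC0 (Ne.symm hCz)
      have hd : (1 / (Real.sqrt B_G * C)) ^ 2 = 1 / (B_G * C ^ 2) := by
        rw [div_pow, mul_pow, Real.sq_sqrt hBG.le]
        norm_num
      rw [hd]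
      rw [div_mul_eq_mul_div, div_le_iff₀ (by positivity)]
      nlinarith
end

section
/- Let F and G be weakly measurable maps from Ω to H with G a Bessel mapping with bound B_G, let m ∈ L^∞(Ω, μ) with ‖m‖_∞ > 0, and let M : H → H be a bounded invertible operator satisfying ⟨M f, g⟩ = ∫_Ω m(ω)⟨f, F(ω)⟩⟨G(ω), g⟩ dμ(ω) for all f, g ∈ H (with the integrands integrable). Then F satisfies the lower frame condition: for all f ∈ H, ‖f‖² / (B_G · ‖(M*)⁻¹‖² · ‖m‖_∞²) ≤ ∫_Ω |⟨f, F(ω)⟩|² dμ(ω), where the right-hand side may be infinite. -/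
open MeasureTheory

local notation "⟪" x ", " y "⟫" => @inner ℂ _ _ x y

private lemma myaux {x a b c B nn gn : ℝ} (hx : 0 < x) (ha : 0 ≤ a) (hb : 0 ≤ b) (hc : 0 ≤ c)
    (hB : 0 < B) (hnn : 0 < nn)
    (h2 : x ^ 2 ≤ c * (a ^ (1/2 : ℝ) * b ^ (1/2 : ℝ)))
    (hb_le : b ≤ B * gn ^ 2) (hgn0 : 0 ≤ gn) (hg_le : gn ≤ nn * x) :
    x ^ 2 / (B * nn ^ 2 * c ^ 2) ≤ a := by
  set sa := a ^ (1/2 : ℝ) with hsadef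
  set sb := b ^ (1/2 : ℝ) with hsbdef
  have hsa0 : 0 ≤ sa := Real.rpow_nonneg ha _
  have hsb0 : 0 ≤ sb := Real.rpow_nonneg hb _
  have hsa2 : sa ^ 2 = a := by
    rw [hsadef, ← Real.rpow_natCast (a ^ (1/2 : ℝ)) 2, ← Real.rpow_mul ha]; norm_num
  have hsb2 : sb ^ 2 = b := by
    rw [hsbdef, ← Real.rpow_natCast (b ^ (1/2 : ℝ)) 2, ← Real.rpow_mul hb]; norm_num
  have hDpos : 0 < B * nn ^ 2 * c ^ 2 ∨ c = 0 := by
    rcases eq_or_lt_of_le hc with h | h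
    · exact Or.inr h.symm
    · exact Or.inl (by positivity)
  rcases hDpos with hD | hc0
  · rw [div_le_iff₀ hD]
    have hkey : x ^ 2 * x ^ 2 ≤ (a * (B * nn ^ 2 * c ^ 2)) * x ^ 2 := by
      have h3 : x ^ 2 * x ^ 2 ≤ (c * (sa * sb)) * (c * (sa * sb)) :=
        mul_self_le_mul_self (by positivity) h2
      have h4 : (c * (sa * sb)) * (c * (sa * sb)) = c ^ 2 * (sa ^ 2 * sb ^ 2) := by ring
      rw [h4, hsa2, hsb2] at h3
      have h5 : gn ^ 2 ≤ nn ^ 2 * x ^ 2 := by nlinarith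
      have h6 : b ≤ B * (nn ^ 2 * x ^ 2) := le_trans hb_le (by nlinarith)
      have h7 : a * b ≤ a * (B * (nn ^ 2 * x ^ 2)) := mul_le_mul_of_nonneg_left h6 ha
      have h8 : c ^ 2 * (a * b) ≤ c ^ 2 * (a * (B * (nn ^ 2 * x ^ 2))) :=
        mul_le_mul_of_nonneg_left h7 (sq_nonneg c)
      calc x ^ 2 * x ^ 2 ≤ c ^ 2 * (a * b) := h3
        _ ≤ c ^ 2 * (a * (B * (nn ^ 2 * x ^ 2))) := h8
        _ = a * (B * nn ^ 2 * c ^ 2) * x ^ 2 := by ring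
    have := le_of_mul_le_mul_right hkey (by positivity)
    linarith
  · exfalso
    rw [hc0] at h2
    nlinarith

/-- If the multiplier `M_{m,F,G}` is bounded and invertible, `G` is Bessel with bound `B_G`
and `m ∈ L^∞(Ω, μ)` with `‖m‖_∞ > 0`, then `F` satisfies the lower frame condition with
bound `1 / (B_G ‖(M*)⁻¹‖² ‖m‖_∞²)`.  Here `(M*)⁻¹` is `Ring.inverse (adjoint M)`, the
right-hand side is a lower Lebesgue integral (it may be infinite), and in Mathlib's
convention the paper's `⟨x, y⟩` is `⟪y, x⟫`. -/
theorem lower_frame_bound_of_invertible_multiplier_bounded_symbol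
    {Ω : Type} [MeasurableSpace Ω] (μ : Measure Ω)
    {H : Type} [NormedAddCommGroup H] [InnerProductSpace ℂ H] [CompleteSpace H]
    (F G : Ω → H)
    (hF_meas : ∀ f : H, Measurable fun ω => ⟪F ω, f⟫)
    (hG_meas : ∀ f : H, Measurable fun ω => ⟪G ω, f⟫)
    (B_G : ℝ) (hBG : 0 < B_G)
    (hG_bessel : ∀ f : H,
      ∫⁻ ω, (‖⟪G ω, f⟫‖₊ : ENNReal) ^ 2 ∂μ ≤ ENNReal.ofReal (B_G * ‖f‖ ^ 2))
    (m : Ω → ℂ) (hm : MemLp m ⊤ μ) (hm_pos : 0 < (eLpNorm m ⊤ μ).toReal)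
    (M : H →L[ℂ] H) (hM_unit : IsUnit M)
    (hM_int : ∀ f g : H, Integrable (fun ω => m ω * ⟪F ω, f⟫ * ⟪g, G ω⟫) μ)
    (hM : ∀ f g : H, ⟪g, M f⟫ = ∫ ω, m ω * ⟪F ω, f⟫ * ⟪g, G ω⟫ ∂μ) :
    ∀ f : H,
      ENNReal.ofReal
          (‖f‖ ^ 2 /
            (B_G * ‖Ring.inverse (ContinuousLinearMap.adjoint M)‖ ^ 2 *
              (eLpNorm m ⊤ μ).toReal ^ 2))
        ≤ ∫⁻ ω, (‖⟪F ω, f⟫‖₊ : ENNReal) ^ 2 ∂μ := by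
  intro f
  set N := Ring.inverse (ContinuousLinearMap.adjoint M) with hNdef
  by_cases hA : (∫⁻ ω, (‖⟪F ω, f⟫‖₊ : ENNReal) ^ 2 ∂μ) = ⊤
  · rw [hA]; exact le_top
  by_cases hf : f = 0
  · simp [hf]
  set A := ∫⁻ ω, (‖⟪F ω, f⟫‖₊ : ENNReal) ^ 2 ∂μ with hAdef
  set g := N f with hgdef
  have hU : IsUnit (ContinuousLinearMap.adjoint M) := by
    simpa [ContinuousLinearMap.star_eq_adjoint] using hM_unit.star
  have hMg : (ContinuousLinearMap.adjoint M) g = f := by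
    have h1 : (ContinuousLinearMap.adjoint M) * N = 1 := Ring.mul_inverse_cancel _ hU
    have h2 := congrArg (fun T : H →L[ℂ] H => T f) h1
    simpa [hgdef] using h2
  have hinner : ⟪g, M f⟫ = ((‖f‖ : ℂ)) ^ 2 := by
    rw [← ContinuousLinearMap.adjoint_inner_left, hMg, inner_self_eq_norm_sq_to_K]
    norm_cast
  set Bg := ∫⁻ ω, (‖⟪G ω, g⟫‖₊ : ENNReal) ^ 2 ∂μ with hBgdef
  have hBg_le : Bg ≤ ENNReal.ofReal (B_G * ‖g‖ ^ 2) := hG_bessel g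
  have hBg_ne : Bg ≠ ⊤ := ne_top_of_le_ne_top ENNReal.ofReal_ne_top hBg_le
  set Cm := eLpNorm m ⊤ μ with hCmdef
  have hCm_ne : Cm ≠ ⊤ := hm.2.ne
  have hmeq : ∀ ω, (‖m ω * ⟪F ω, f⟫ * ⟪g, G ω⟫‖₊ : ENNReal)
      = (‖m ω‖₊ : ENNReal) * ((‖⟪F ω, f⟫‖₊ : ENNReal) * (‖⟪G ω, g⟫‖₊ : ENNReal)) := by
    intro ω
    have hc : (‖⟪g, G ω⟫‖₊ : NNReal) = ‖⟪G ω, g⟫‖₊ := by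
      rw [← inner_conj_symm (G ω) g, RCLike.nnnorm_conj]
    simp [nnnorm_mul, ENNReal.coe_mul, mul_assoc, hc]
  have h2e : ∀ x : ENNReal, x ^ (2 : ℝ) = x ^ (2 : ℕ) := fun x => by
    rw [← ENNReal.rpow_natCast]; norm_num
  have h1 : ENNReal.ofReal (‖f‖ ^ 2) ≤ Cm * (A ^ (1/2 : ℝ) * Bg ^ (1/2 : ℝ)) := by
    calc ENNReal.ofReal (‖f‖ ^ 2)
        = ENNReal.ofReal ‖∫ ω, m ω * ⟪F ω, f⟫ * ⟪g, G ω⟫ ∂μ‖ := by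
          rw [← hM f g, hinner]
          congr 1
          rw [norm_pow]
          norm_num
      _ ≤ ENNReal.ofReal (∫ ω, ‖m ω * ⟪F ω, f⟫ * ⟪g, G ω⟫‖ ∂μ) :=
          ENNReal.ofReal_le_ofReal (norm_integral_le_integral_norm _)
      _ = ∫⁻ ω, (‖m ω * ⟪F ω, f⟫ * ⟪g, G ω⟫‖₊ : ENNReal) ∂μ :=
          ofReal_integral_norm_eq_lintegral_enorm (hM_int f g)
      _ = ∫⁻ ω, (‖m ω‖₊ : ENNReal) * ((‖⟪F ω, f⟫‖₊ : ENNReal) * (‖⟪G ω, g⟫‖₊ : ENNReal)) ∂μ :=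
          lintegral_congr hmeq
      _ ≤ ∫⁻ ω, Cm * ((‖⟪F ω, f⟫‖₊ : ENNReal) * (‖⟪G ω, g⟫‖₊ : ENNReal)) ∂μ := by
          refine lintegral_mono_ae ?_
          filter_upwards [ae_le_eLpNormEssSup (f := m) (μ := μ)] with ω hω
          exact mul_le_mul_left (by rw [hCmdef, eLpNorm_exponent_top]; exact hω) _
      _ = Cm * ∫⁻ ω, (‖⟪F ω, f⟫‖₊ : ENNReal) * (‖⟪G ω, g⟫‖₊ : ENNReal) ∂μ :=
          lintegral_const_mul' _ _ hCm_ne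
      _ ≤ Cm * (A ^ (1/2 : ℝ) * Bg ^ (1/2 : ℝ)) := by
          refine mul_le_mul_right ?_ _
          have hconj : Real.HolderConjugate 2 2 := Real.HolderConjugate.two_two
          have hH := ENNReal.lintegral_mul_le_Lp_mul_Lq μ hconj
            ((hF_meas f).enorm.aemeasurable) ((hG_meas g).enorm.aemeasurable)
          simp only [Pi.mul_apply, h2e, enorm_eq_nnnorm] at hH
          simpa [hAdef, hBgdef] using hH
  have hprod_ne : Cm * (A ^ (1/2 : ℝ) * Bg ^ (1/2 : ℝ)) ≠ ⊤ :=
    ENNReal.mul_ne_top hCm_ne (ENNReal.mul_ne_top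
      (ENNReal.rpow_ne_top_of_nonneg (by norm_num) hA)
      (ENNReal.rpow_ne_top_of_nonneg (by norm_num) hBg_ne))
  have h2 : ‖f‖ ^ 2 ≤ Cm.toReal * ((A.toReal) ^ (1/2 : ℝ) * (Bg.toReal) ^ (1/2 : ℝ)) := by
    have := (ENNReal.ofReal_le_iff_le_toReal hprod_ne).mp h1
    rwa [ENNReal.toReal_mul, ENNReal.toReal_mul, ← ENNReal.toReal_rpow, ← ENNReal.toReal_rpow]
      at this
  have hb_le : Bg.toReal ≤ B_G * ‖g‖ ^ 2 :=
    ENNReal.toReal_le_of_le_ofReal (by positivity) hBg_le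
  have hg_le : ‖g‖ ≤ ‖N‖ * ‖f‖ := N.le_opNorm f
  have hfpos : 0 < ‖f‖ := norm_pos_iff.mpr hf
  have hN0 : N ≠ 0 := by
    intro h
    apply hf
    have hg0 : g = 0 := by rw [hgdef, h]; simp
    rw [← hMg, hg0, map_zero]
  have hNpos : 0 < ‖N‖ := norm_pos_iff.mpr hN0
  have hgoal : ‖f‖ ^ 2 / (B_G * ‖N‖ ^ 2 * Cm.toReal ^ 2) ≤ A.toReal :=
    myaux hfpos ENNReal.toReal_nonneg ENNReal.toReal_nonneg ENNReal.toReal_nonneg hBG hNpos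
      h2 hb_le (norm_nonneg g) hg_le
  calc ENNReal.ofReal (‖f‖ ^ 2 / (B_G * ‖N‖ ^ 2 * Cm.toReal ^ 2))
      ≤ ENNReal.ofReal A.toReal := ENNReal.ofReal_le_ofReal hgoal
    _ = A := ENNReal.ofReal_toReal hA
end

section
/- Let F and G be weakly measurable maps from Ω to H with G a continuous frame, let m : Ω → ℂ be measurable, and let M : H → H be a bounded invertible operator satisfying ⟨M f, g⟩ = ∫_Ω m(ω)⟨f, F(ω)⟩⟨G(ω), g⟩ dμ(ω) for all f, g ∈ H (with the integrands integrable). Then the map ω ↦ (M⁻¹)*(conj(m(ω)) F(ω)) is a dual of G in the sense of the reproducing identity: for all f, g ∈ H, ⟨f, g⟩ = ∫_Ω ⟨f, (M⁻¹)*(conj(m(ω)) F(ω))⟩ ⟨G(ω), g⟩ dμ(ω). -/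
open MeasureTheory ComplexConjugate

local notation "⟪" x ", " y "⟫" => @inner ℂ _ _ x y

/-- If the multiplier `M = M_{m,F,G}` is bounded and invertible and `G` is a continuous
frame, then `ω ↦ (M⁻¹)* (conj(m(ω)) F(ω))` is a dual of `G`:
`⟨f, g⟩ = ∫ ⟨f, (M⁻¹)*(conj(m(ω)) F(ω))⟩ ⟨G(ω), g⟩ dμ` for all `f, g`.
Here `M` is taken as a continuous linear equivalence, `(M⁻¹)* = adjoint (M.symm)`, and in
Mathlib's convention the paper's `⟨x, y⟩` is `⟪y, x⟫`. -/
theorem dual_frame_from_invertible_multiplier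
    {Ω : Type} [MeasurableSpace Ω] (μ : Measure Ω)
    {H : Type} [NormedAddCommGroup H] [InnerProductSpace ℂ H] [CompleteSpace H]
    (F G : Ω → H)
    (hF_meas : ∀ f : H, Measurable fun ω => ⟪F ω, f⟫)
    (hG_meas : ∀ f : H, Measurable fun ω => ⟪G ω, f⟫)
    (A_G B_G : ℝ) (hAG : 0 < A_G)
    (hG_lower : ∀ f : H,
      ENNReal.ofReal (A_G * ‖f‖ ^ 2) ≤ ∫⁻ ω, (‖⟪G ω, f⟫‖₊ : ENNReal) ^ 2 ∂μ)
    (hG_upper : ∀ f : H,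
      ∫⁻ ω, (‖⟪G ω, f⟫‖₊ : ENNReal) ^ 2 ∂μ ≤ ENNReal.ofReal (B_G * ‖f‖ ^ 2))
    (m : Ω → ℂ) (hm_meas : Measurable m)
    (M : H ≃L[ℂ] H)
    (hM_int : ∀ f g : H, Integrable (fun ω => m ω * ⟪F ω, f⟫ * ⟪g, G ω⟫) μ)
    (hM : ∀ f g : H, ⟪g, M f⟫ = ∫ ω, m ω * ⟪F ω, f⟫ * ⟪g, G ω⟫ ∂μ) :
    ∀ f g : H,
      Integrable
        (fun ω =>
          ⟪ContinuousLinearMap.adjoint (M.symm : H →L[ℂ] H) (conj (m ω) • F ω), f⟫ *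
            ⟪g, G ω⟫) μ ∧
      ⟪g, f⟫ = ∫ ω,
          ⟪ContinuousLinearMap.adjoint (M.symm : H →L[ℂ] H) (conj (m ω) • F ω), f⟫ *
            ⟪g, G ω⟫ ∂μ := by
  intro f g
  have key : ∀ ω, ⟪ContinuousLinearMap.adjoint (M.symm : H →L[ℂ] H) (conj (m ω) • F ω), f⟫ =
      m ω * ⟪F ω, M.symm f⟫ := by
    intro ω
    rw [ContinuousLinearMap.adjoint_inner_left, inner_smul_left, Complex.conj_conj]
    rfl
  constructor
  · have := hM_int (M.symm f) g
    refine this.congr ?_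
    filter_upwards with ω
    rw [key ω]
  · have h := hM (M.symm f) g
    rw [M.apply_symm_apply] at h
    rw [h]
    refine integral_congr_ae ?_
    filter_upwards with ω
    rw [key ω]
end
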